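/- Let (R, ∘_λ) be an r-dimensional right Novikov conformal superalgebra and define a ∗_λ b = a ∘_λ b + (−1)^{αβ} b ∘_{−λ−T} a for homogeneous a ∈ R_α, b ∈ R_β. Then for all homogeneous a, b, c with a of parity α and b of parity β: a ∗_λ (b ∗_μ c) + 2(a ∘_λ b) ∗_{λ+μ} c − (a ∗_λ b) ∗_{λ+μ} c − (−1)^{αβ} b ∗_μ (a ∗_λ c) = 0. -/

import Mathlib

open Finsupp MvPolynomial
open scoped TensorProduct

namespace CA

noncomputable section

variable (r : ℕ) (R : Type*) [AddCommGroup R] [Module ℂ R]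
  [Module (MvPolynomial (Fin r) ℂ) R] [IsScalarTower ℂ (MvPolynomial (Fin r) ℂ) R]

/-- Polynomials in `r` variables (the `λ`'s) with coefficients in `R`,
encoded via exponent multi-indices. -/
abbrev VP : Type _ := (Fin r →₀ ℕ) →₀ R

/-- Polynomials in two families of `r` variables (`λ`'s = `Sum.inl`, `μ`'s = `Sum.inr`)
with coefficients in `R`. -/
abbrev BP : Type _ := ((Fin r ⊕ Fin r) →₀ ℕ) →₀ R

/-- The action of `T i` on `R`, as a `ℂ`-linear endomorphism. -/
def tAct (i : Fin r) : R →ₗ[ℂ] R where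
  toFun v := (X i : MvPolynomial (Fin r) ℂ) • v
  map_add' u v := smul_add _ u v
  map_smul' c v := by
    simp only [RingHom.id_apply]
    rw [← algebraMap_smul (MvPolynomial (Fin r) ℂ) c v, ← mul_smul, mul_comm, mul_smul,
      algebraMap_smul]

/-- Multiplication by the variable `λ i` on `VP`. -/
def vLam (i : Fin r) : Module.End ℂ (VP r R) :=
  Finsupp.lmapDomain R ℂ (· + Finsupp.single i 1)

/-- The action of `T i` on the coefficients of an element of `VP`. -/
def vT (i : Fin r) : Module.End ℂ (VP r R) :=
  Finsupp.mapRange.linearMap (tAct r R i)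

/-- The substitution `λ ↦ -λ - T` on `VP`. -/
def vNeg (F : VP r R) : VP r R :=
  F.sum fun k v =>
    ((List.ofFn fun i : Fin r => (-(vLam r R i) - vT r R i) ^ (k i)).prod)
      (Finsupp.single 0 v)

/-- Multiplication by the monomial with exponent `e` on `BP`. -/
def bShift (e : (Fin r ⊕ Fin r) →₀ ℕ) : Module.End ℂ (BP r R) :=
  Finsupp.lmapDomain R ℂ (· + e)

/-- Multiplication by `λ i` on `BP`. -/
def bLam (i : Fin r) : Module.End ℂ (BP r R) := bShift r R (Finsupp.single (Sum.inl i) 1)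

/-- Multiplication by `μ i` on `BP`. -/
def bMu (i : Fin r) : Module.End ℂ (BP r R) := bShift r R (Finsupp.single (Sum.inr i) 1)

/-- The action of `T i` on the coefficients of an element of `BP`. -/
def bT (i : Fin r) : Module.End ℂ (BP r R) :=
  Finsupp.mapRange.linearMap (tAct r R i)

/-- Evaluation of an element of `VP` at a (commuting) family `s` of operators on `BP`:
`Σ_k λ^k v_k ↦ Σ_k s^k (v_k)`. -/
def ev (s : Fin r → Module.End ℂ (BP r R)) (F : VP r R) : BP r R :=
  F.sum fun k v => ((List.ofFn fun i : Fin r => (s i) ^ (k i)).prod) (Finsupp.single 0 v)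

/-- Extension of a `λ`-product `p` to a polynomial first argument, evaluated at the
family of operators `s`:  `(Σ_e x^e v_e)_s b = Σ_e x^e · (p v_e b)(s)`. -/
def evL (p : R → R → VP r R) (s : Fin r → Module.End ℂ (BP r R)) (F : BP r R) (b : R) :
    BP r R :=
  F.sum fun e v => bShift r R e (ev r R s (p v b))

/-- Extension of a `λ`-product `p` to a polynomial second argument, evaluated at the
family of operators `s`:  `a_s (Σ_e x^e w_e) = Σ_e x^e · (p a w_e)(s)`. -/
def evR (p : R → R → VP r R) (s : Fin r → Module.End ℂ (BP r R)) (a : R) (G : BP r R) :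
    BP r R :=
  G.sum fun e w => bShift r R e (ev r R s (p a w))

/-- The family `λ`. -/
def FL : Fin r → Module.End ℂ (BP r R) := fun i => bLam r R i
/-- The family `μ`. -/
def FM : Fin r → Module.End ℂ (BP r R) := fun i => bMu r R i
/-- The family `λ + μ`. -/
def FLM : Fin r → Module.End ℂ (BP r R) := fun i => bLam r R i + bMu r R i
/-- The family `-λ - T`. -/
def FNL : Fin r → Module.End ℂ (BP r R) := fun i => -(bLam r R i) - bT r R i
/-- The family `-μ - T`. -/
def FNM : Fin r → Module.End ℂ (BP r R) := fun i => -(bMu r R i) - bT r R i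
/-- The family `-λ - μ - T`. -/
def FNLM : Fin r → Module.End ℂ (BP r R) := fun i => -(bLam r R i) - bMu r R i - bT r R i

/-- The sign `(-1)^(αβ)` for parities `α β : ZMod 2`. -/
def sgn (α β : ZMod 2) : ℤ := (-1) ^ (α.val * β.val)

/-- `ℂ`-bilinearity of a `λ`-product. -/
def Bilin (p : R → R → VP r R) : Prop :=
  (∀ a b c : R, p (a + b) c = p a c + p b c) ∧
  (∀ a b c : R, p a (b + c) = p a b + p a c) ∧
  (∀ (z : ℂ) (a b : R), p (z • a) b = z • p a b) ∧
  (∀ (z : ℂ) (a b : R), p a (z • b) = z • p a b)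

/-- A `λ`-product is parity-preserving w.r.t. a grading `G`. -/
def ParityPres (G : ZMod 2 → Submodule ℂ R) (p : R → R → VP r R) : Prop :=
  ∀ (α β : ZMod 2) (a b : R), a ∈ G α → b ∈ G β → ∀ k, p a b k ∈ G (α + β)

/-- Conformal sesquilinearity: `(T_i a)_λ b = -λ_i (a_λ b)` and
`a_λ (T_i b) = (T_i + λ_i)(a_λ b)`. -/
def Sesq (p : R → R → VP r R) : Prop :=
  ∀ (i : Fin r) (a b : R),
    p ((X i : MvPolynomial (Fin r) ℂ) • a) b = (-(vLam r R i)) (p a b) ∧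
    p a ((X i : MvPolynomial (Fin r) ℂ) • b) = (vT r R i + vLam r R i) (p a b)

/-- `G` is a `ℤ/2ℤ`-grading of the `ℂ[T]`-module `R`. -/
def IsGraded (G : ZMod 2 → Submodule ℂ R) : Prop :=
  DirectSum.IsInternal G ∧
  ∀ (i : Fin r) (α : ZMod 2) (v : R), v ∈ G α →
    (X i : MvPolynomial (Fin r) ℂ) • v ∈ G α

/-- Conformal skew-symmetry `[a_λ b] = -(-1)^{αβ} [b_{-λ-T} a]`. -/
def Skew (G : ZMod 2 → Submodule ℂ R) (q : R → R → VP r R) : Prop :=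
  ∀ (α β : ZMod 2) (a b : R), a ∈ G α → b ∈ G β →
    q a b = -(sgn α β • vNeg r R (q b a))

/-- Conformal Jacobi identity
`[a_λ [b_μ c]] = [[a_λ b]_{λ+μ} c] + (-1)^{αβ} [b_μ [a_λ c]]`. -/
def Jacobi (G : ZMod 2 → Submodule ℂ R) (q : R → R → VP r R) : Prop :=
  ∀ (α β : ZMod 2) (a b c : R), a ∈ G α → b ∈ G β →
    evR r R q (FL r R) a (ev r R (FM r R) (q b c)) =
      evL r R q (FLM r R) (ev r R (FL r R) (q a b)) c +
      sgn α β • evR r R q (FM r R) b (ev r R (FL r R) (q a c))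

/-- `q` is an `r`-dimensional Lie conformal superalgebra `λ`-bracket on `R` graded by `G`. -/
def IsLieConfSuper (G : ZMod 2 → Submodule ℂ R) (q : R → R → VP r R) : Prop :=
  Bilin r R q ∧ ParityPres r R G q ∧ Sesq r R q ∧ Skew r R G q ∧ Jacobi r R G q

/-- Left Novikov conformal identity
`(a_λ b)_{λ+μ} c - a_λ (b_μ c) = (-1)^{αβ} ((b_μ a)_{λ+μ} c - b_μ (a_λ c))`. -/
def NovLeft1 (G : ZMod 2 → Submodule ℂ R) (p : R → R → VP r R) : Prop :=
  ∀ (α β : ZMod 2) (a b c : R), a ∈ G α → b ∈ G β →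
    evL r R p (FLM r R) (ev r R (FL r R) (p a b)) c -
      evR r R p (FL r R) a (ev r R (FM r R) (p b c)) =
    sgn α β • (evL r R p (FLM r R) (ev r R (FM r R) (p b a)) c -
      evR r R p (FM r R) b (ev r R (FL r R) (p a c)))

/-- Left Novikov conformal identity `(a_λ b)_{λ+μ} c = (-1)^{βγ} (a_λ c)_{-μ-T} b`. -/
def NovLeft2 (G : ZMod 2 → Submodule ℂ R) (p : R → R → VP r R) : Prop :=
  ∀ (β γ : ZMod 2) (a b c : R), b ∈ G β → c ∈ G γ →
    evL r R p (FLM r R) (ev r R (FL r R) (p a b)) c =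
      sgn β γ • evL r R p (FNM r R) (ev r R (FL r R) (p a c)) b

/-- `p` is an `r`-dimensional (left) Novikov conformal superalgebra `λ`-product. -/
def IsNovLeft (G : ZMod 2 → Submodule ℂ R) (p : R → R → VP r R) : Prop :=
  Bilin r R p ∧ ParityPres r R G p ∧ Sesq r R p ∧ NovLeft1 r R G p ∧ NovLeft2 r R G p

/-- Right Novikov conformal identity
`a_λ (b_μ c) - (a_λ b)_{λ+μ} c = (-1)^{βγ} (a_λ (c_{-μ-T} b) - (a_λ c)_{-μ-T} b)`. -/
def NovRight1 (G : ZMod 2 → Submodule ℂ R) (p : R → R → VP r R) : Prop :=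
  ∀ (β γ : ZMod 2) (a b c : R), b ∈ G β → c ∈ G γ →
    evR r R p (FL r R) a (ev r R (FM r R) (p b c)) -
      evL r R p (FLM r R) (ev r R (FL r R) (p a b)) c =
    sgn β γ • (evR r R p (FL r R) a (ev r R (FNM r R) (p c b)) -
      evL r R p (FNM r R) (ev r R (FL r R) (p a c)) b)

/-- Right Novikov conformal identity `a_λ (b_μ c) = (-1)^{αβ} b_μ (a_λ c)`. -/
def NovRight2 (G : ZMod 2 → Submodule ℂ R) (p : R → R → VP r R) : Prop :=
  ∀ (α β : ZMod 2) (a b c : R), a ∈ G α → b ∈ G β →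
    evR r R p (FL r R) a (ev r R (FM r R) (p b c)) =
      sgn α β • evR r R p (FM r R) b (ev r R (FL r R) (p a c))

/-- `p` is an `r`-dimensional right Novikov conformal superalgebra `λ`-product. -/
def IsNovRight (G : ZMod 2 → Submodule ℂ R) (p : R → R → VP r R) : Prop :=
  Bilin r R p ∧ ParityPres r R G p ∧ Sesq r R p ∧ NovRight1 r R G p ∧ NovRight2 r R G p

/-- The compatibility condition of a super Gel'fand-Dorfman conformal bialgebra:
`[(a_{-μ-T} b)_{-λ-T} c] + [a_{-μ-T} b]_{-λ-T} c - a_{-λ-μ-T} [b_{-λ-T} c]`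
`- (-1)^{βγ} [(a_{-λ-T} c)_{-μ-T} b] - (-1)^{βγ} [a_{-λ-T} c]_{-μ-T} b = 0`. -/
def GDCompat (G : ZMod 2 → Submodule ℂ R) (p q : R → R → VP r R) : Prop :=
  ∀ (β γ : ZMod 2) (a b c : R), b ∈ G β → c ∈ G γ →
    evL r R q (FNL r R) (ev r R (FNM r R) (p a b)) c +
    evL r R p (FNL r R) (ev r R (FNM r R) (q a b)) c -
    evR r R p (FNLM r R) a (ev r R (FNL r R) (q b c)) -
    sgn β γ • evL r R q (FNM r R) (ev r R (FNL r R) (p a c)) b -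
    sgn β γ • evL r R p (FNM r R) (ev r R (FNL r R) (q a c)) b = 0

/-- `(R, p, q)` is an `r`-dimensional super Gel'fand-Dorfman conformal bialgebra. -/
def IsGDConf (G : ZMod 2 → Submodule ℂ R) (p q : R → R → VP r R) : Prop :=
  IsNovLeft r R G p ∧ IsLieConfSuper r R G q ∧ GDCompat r R G p q

/-! Ungraded (purely even) versions. -/

def Skew' (q : R → R → VP r R) : Prop :=
  ∀ a b : R, q a b = -(vNeg r R (q b a))

def Jacobi' (q : R → R → VP r R) : Prop :=
  ∀ a b c : R,
    evR r R q (FL r R) a (ev r R (FM r R) (q b c)) =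
      evL r R q (FLM r R) (ev r R (FL r R) (q a b)) c +
      evR r R q (FM r R) b (ev r R (FL r R) (q a c))

/-- `q` is an `r`-dimensional Lie conformal algebra `λ`-bracket on `R`. -/
def IsLieConf' (q : R → R → VP r R) : Prop :=
  Bilin r R q ∧ Sesq r R q ∧ Skew' r R q ∧ Jacobi' r R q

def NovLeft1' (p : R → R → VP r R) : Prop :=
  ∀ a b c : R,
    evL r R p (FLM r R) (ev r R (FL r R) (p a b)) c -
      evR r R p (FL r R) a (ev r R (FM r R) (p b c)) =
    evL r R p (FLM r R) (ev r R (FM r R) (p b a)) c -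
      evR r R p (FM r R) b (ev r R (FL r R) (p a c))

def NovLeft2' (p : R → R → VP r R) : Prop :=
  ∀ a b c : R,
    evL r R p (FLM r R) (ev r R (FL r R) (p a b)) c =
      evL r R p (FNM r R) (ev r R (FL r R) (p a c)) b

/-- `p` is an `r`-dimensional (left) Novikov conformal algebra `λ`-product. -/
def IsNovLeft' (p : R → R → VP r R) : Prop :=
  Bilin r R p ∧ Sesq r R p ∧ NovLeft1' r R p ∧ NovLeft2' r R p

def GDCompat' (p q : R → R → VP r R) : Prop :=
  ∀ a b c : R,
    evL r R q (FNL r R) (ev r R (FNM r R) (p a b)) c +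
    evL r R p (FNL r R) (ev r R (FNM r R) (q a b)) c -
    evR r R p (FNLM r R) a (ev r R (FNL r R) (q b c)) -
    evL r R q (FNM r R) (ev r R (FNL r R) (p a c)) b -
    evL r R p (FNM r R) (ev r R (FNL r R) (q a c)) b = 0

/-- `(R, p, q)` is an `r`-dimensional Gel'fand-Dorfman conformal bialgebra. -/
def IsGDConf' (p q : R → R → VP r R) : Prop :=
  IsNovLeft' r R p ∧ IsLieConf' r R q ∧ GDCompat' r R p q

end

/-! Ordinary (non-conformal) structures on a complex vector space. -/

noncomputable section

variable (V : Type*) [AddCommGroup V] [Module ℂ V]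

/-- `ℂ`-bilinearity of an ordinary product. -/
def BilinV (m : V → V → V) : Prop :=
  (∀ a b c : V, m (a + b) c = m a c + m b c) ∧
  (∀ a b c : V, m a (b + c) = m a b + m a c) ∧
  (∀ (z : ℂ) (a b : V), m (z • a) b = z • m a b) ∧
  (∀ (z : ℂ) (a b : V), m a (z • b) = z • m a b)

def ParityPresV (G : ZMod 2 → Submodule ℂ V) (m : V → V → V) : Prop :=
  ∀ (α β : ZMod 2) (a b : V), a ∈ G α → b ∈ G β → m a b ∈ G (α + β)

/-- `br` is a Lie superalgebra bracket on `V` graded by `G`. -/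
def IsLieSuper (G : ZMod 2 → Submodule ℂ V) (br : V → V → V) : Prop :=
  BilinV V br ∧ ParityPresV V G br ∧
  (∀ (α β : ZMod 2) (a b : V), a ∈ G α → b ∈ G β → br a b = -(sgn α β • br b a)) ∧
  (∀ (α β : ZMod 2) (a b : V), a ∈ G α → b ∈ G β → ∀ c : V,
    br a (br b c) = br (br a b) c + sgn α β • br b (br a c))

/-- `m` is a (left) Novikov superalgebra product on `V` graded by `G`. -/
def IsNovSuper (G : ZMod 2 → Submodule ℂ V) (m : V → V → V) : Prop :=
  BilinV V m ∧ ParityPresV V G m ∧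
  (∀ (β γ : ZMod 2) (b c : V), b ∈ G β → c ∈ G γ → ∀ a : V,
    m (m a b) c = sgn β γ • m (m a c) b) ∧
  (∀ (α β : ZMod 2) (a b : V), a ∈ G α → b ∈ G β → ∀ c : V,
    m (m a b) c - m a (m b c) = sgn α β • (m (m b a) c - m b (m a c)))

/-- `m` is a supercommutative associative product on `V` graded by `G`. -/
def IsCommAssocSuper (G : ZMod 2 → Submodule ℂ V) (m : V → V → V) : Prop :=
  BilinV V m ∧ ParityPresV V G m ∧
  (∀ (α β : ZMod 2) (a b : V), a ∈ G α → b ∈ G β → m a b = sgn α β • m b a) ∧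
  (∀ a b c : V, m (m a b) c = m a (m b c))

/-- `(V, m, dot)` is a Novikov-Poisson superalgebra. -/
def IsNovPoissonSuper (G : ZMod 2 → Submodule ℂ V) (m dot : V → V → V) : Prop :=
  IsNovSuper V G m ∧ IsCommAssocSuper V G dot ∧
  (∀ (α β : ZMod 2) (a b : V), a ∈ G α → b ∈ G β → ∀ c : V,
    dot (m a b) c - m a (dot b c) = sgn α β • (dot (m b a) c - m b (dot a c))) ∧
  (∀ a b c : V, m (dot a b) c = dot a (m b c))

/-- `(V, br, m)` is a super Gel'fand-Dorfman bialgebra. -/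
def IsGDSuper (G : ZMod 2 → Submodule ℂ V) (br m : V → V → V) : Prop :=
  IsLieSuper V G br ∧ IsNovSuper V G m ∧
  (∀ (β γ : ZMod 2) (b c : V), b ∈ G β → c ∈ G γ → ∀ a : V,
    br (m a b) c + m (br a b) c - m a (br b c) -
      sgn β γ • br (m a c) b - sgn β γ • m (br a c) b = 0)

/-- `br` is a Lie algebra bracket on `V`. -/
def IsLieAlg (br : V → V → V) : Prop :=
  BilinV V br ∧ (∀ a b : V, br a b = -br b a) ∧
  (∀ a b c : V, br a (br b c) = br (br a b) c + br b (br a c))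

/-- `m` is a (left) Novikov algebra product on `V`. -/
def IsNovAlg (m : V → V → V) : Prop :=
  BilinV V m ∧ (∀ a b c : V, m (m a b) c = m (m a c) b) ∧
  (∀ a b c : V, m (m a b) c - m a (m b c) = m (m b a) c - m b (m a c))

/-- `m` is a commutative associative product on `V`. -/
def IsCommAssoc (m : V → V → V) : Prop :=
  BilinV V m ∧ (∀ a b : V, m a b = m b a) ∧ (∀ a b c : V, m (m a b) c = m a (m b c))

/-- `(V, m, dot)` is a Novikov-Poisson algebra. -/
def IsNovPoisson (m dot : V → V → V) : Prop :=
  IsNovAlg V m ∧ IsCommAssoc V dot ∧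
  (∀ a b c : V, dot (m a b) c - m a (dot b c) = dot (m b a) c - m b (dot a c)) ∧
  (∀ a b c : V, m (dot a b) c = dot a (m b c))

/-- `(V, br, dot)` is a Lie-Poisson algebra. -/
def IsLiePoisson (br dot : V → V → V) : Prop :=
  IsLieAlg V br ∧ IsCommAssoc V dot ∧
  (∀ a b c : V, br a (dot b c) = dot (br a b) c + dot b (br a c))

/-- `(V, br, m)` is a Gel'fand-Dorfman bialgebra. -/
def IsGD (br m : V → V → V) : Prop :=
  IsLieAlg V br ∧ IsNovAlg V m ∧
  (∀ a b c : V,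
    br (m a b) c + m (br a b) c - m a (br b c) - br (m a c) b - m (br a c) b = 0)

end

/-! Free `ℂ[T₁,…,T_r]`-modules on a graded vector space. -/

noncomputable section

variable (r : ℕ) (V : Type*) [AddCommGroup V] [Module ℂ V]

/-- The free `ℂ[T₁,…,T_r]`-module `ℂ[T₁,…,T_r] ⊗ V` on the vector space `V`. -/
abbrev TR : Type _ := MvPolynomial (Fin r) ℂ ⊗[ℂ] V

/-- The embedding of `V` into `ℂ[T₁,…,T_r] ⊗ V`. -/
def ιT : V → TR r V := fun v => (1 : MvPolynomial (Fin r) ℂ) ⊗ₜ[ℂ] v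

/-- The grading of `ℂ[T₁,…,T_r] ⊗ V` induced by a grading of `V` (the `T`'s are even). -/
def TG (G : ZMod 2 → Submodule ℂ V) : ZMod 2 → Submodule ℂ (TR r V) := fun α =>
  Submodule.span ℂ {x : TR r V |
    ∃ (f : MvPolynomial (Fin r) ℂ) (v : V), v ∈ G α ∧ x = f ⊗ₜ[ℂ] v}

end



section ListAux

variable {M : Type*}

private lemma listprod_pow_zero [Monoid M] {n : ℕ} (s : Fin n → M) :
    (List.ofFn fun i => s i ^ (0 : ℕ)).prod = 1 := by
  simp

private lemma listprod_pow_add [Monoid M] :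
    ∀ {n : ℕ} (s : Fin n → M), (∀ i j, Commute (s i) (s j)) → ∀ (k e : Fin n → ℕ),
    (List.ofFn fun i => s i ^ (k i + e i)).prod
      = (List.ofFn fun i => s i ^ k i).prod * (List.ofFn fun i => s i ^ e i).prod
  | 0, s, _, k, e => by simp
  | (n+1), s, h, k, e => by
      have IH := listprod_pow_add (fun i => s i.succ) (fun i j => h _ _)
        (fun i => k i.succ) (fun i => e i.succ)
      simp only [List.ofFn_succ, List.prod_cons]
      rw [IH, pow_add]
      have hc : Commute (s 0 ^ e 0) (List.ofFn fun i : Fin n => s i.succ ^ k i.succ).prod := by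
        apply Commute.list_prod_right
        intro x hx
        rw [List.mem_ofFn] at hx
        obtain ⟨i, rfl⟩ := hx
        exact (h 0 i.succ).pow_pow _ _
      rw [mul_assoc, mul_assoc]
      congr 1
      rw [← mul_assoc, hc.eq, mul_assoc]

private lemma listprod_pow_single [Monoid M] :
    ∀ {n : ℕ} (s : Fin n → M) (i : Fin n),
    (List.ofFn fun j => s j ^ (if i = j then 1 else 0)).prod = s i
  | 0, _, i => i.elim0
  | (n+1), s, i => by
      induction i using Fin.cases with
      | zero =>
          simp only [List.ofFn_succ, List.prod_cons, if_pos rfl, pow_one]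
          have h0 : ∀ j : Fin n, ((0 : Fin (n+1)) = j.succ) = False := by
            intro j; simp [(Fin.succ_ne_zero j).symm]
          simp [h0]
      | succ i' =>
          simp only [List.ofFn_succ, List.prod_cons]
          have h0 : (i'.succ = (0 : Fin (n+1))) = False := by simp [Fin.succ_ne_zero i']
          have h1 : ∀ j : Fin n, (i'.succ = j.succ) = (i' = j) := by
            intro j; simp [Fin.succ_inj]
          simp only [h0, if_false, pow_zero, one_mul, h1]
          exact listprod_pow_single (fun j => s j.succ) i'

end ListAux

section MopAux

/-- Ordered product of powers of a family of endomorphisms. -/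
noncomputable def mop {n : ℕ} {M : Type*} [AddCommMonoid M] [Module ℂ M]
    (s : Fin n → Module.End ℂ M) (k : Fin n → ℕ) : Module.End ℂ M :=
  (List.ofFn fun i => s i ^ k i).prod

variable {n : ℕ} {M N : Type*} [AddCommMonoid M] [Module ℂ M] [AddCommMonoid N] [Module ℂ N]

lemma mop_zero (s : Fin n → Module.End ℂ M) : mop s (fun _ => 0) = 1 :=
  listprod_pow_zero s

lemma mop_add (s : Fin n → Module.End ℂ M) (h : ∀ i j, Commute (s i) (s j)) (k e : Fin n → ℕ) :
    mop s (fun i => k i + e i) = mop s k * mop s e :=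
  listprod_pow_add s h k e

lemma mop_single_one (s : Fin n → Module.End ℂ M) (i : Fin n) :
    mop s (fun j => if i = j then 1 else 0) = s i :=
  listprod_pow_single s i

lemma commute_mop {u : Module.End ℂ M} (s : Fin n → Module.End ℂ M)
    (h : ∀ i, Commute u (s i)) (k : Fin n → ℕ) : Commute u (mop s k) := by
  apply Commute.list_prod_right
  intro x hx
  rw [List.mem_ofFn] at hx
  obtain ⟨i, rfl⟩ := hx
  exact (h i).pow_right _

lemma mop_intertwine (ψ : M → N) :
    ∀ {m : ℕ} (a : Fin m → Module.End ℂ M) (b : Fin m → Module.End ℂ N),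
    (∀ i x, ψ (a i x) = b i (ψ x)) → ∀ (k : Fin m → ℕ) (x), ψ (mop a k x) = mop b k (ψ x)
  | 0, a, b, _, k, x => by simp [mop]
  | (m+1), a, b, h, k, x => by
      have hpow : ∀ (i : Fin (m+1)) (mm : ℕ) (x), ψ ((a i ^ mm) x) = (b i ^ mm) (ψ x) := by
        intro i mm
        induction mm with
        | zero => intro x; simp
        | succ mm ih =>
            intro x
            rw [pow_succ, pow_succ, Module.End.mul_apply, Module.End.mul_apply, ih, h]
      simp only [mop, List.ofFn_succ, List.prod_cons, Module.End.mul_apply]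
      rw [show ((List.ofFn fun i : Fin m => a i.succ ^ k i.succ).prod)
            = mop (fun i => a i.succ) (fun i => k i.succ) from rfl] at *
      rw [hpow, mop_intertwine ψ (fun i => a i.succ) (fun i => b i.succ) (fun i x => h i.succ x)
        (fun i => k i.succ) x]
      rfl

end MopAux

set_option linter.unusedSectionVars false

noncomputable section AuxCA

variable {r : ℕ} {R : Type*} [AddCommGroup R] [Module ℂ R]
  [Module (MvPolynomial (Fin r) ℂ) R] [IsScalarTower ℂ (MvPolynomial (Fin r) ℂ) R]

lemma bShift_single (e a : (Fin r ⊕ Fin r) →₀ ℕ) (v : R) :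
    bShift r R e (Finsupp.single a v) = Finsupp.single (a + e) v := by
  simp [bShift, Finsupp.lmapDomain_apply, Finsupp.mapDomain_single]

lemma bT_apply (i : Fin r) (F : BP r R) :
    bT r R i F = Finsupp.mapRange (fun v => (X i : MvPolynomial (Fin r) ℂ) • v)
      (smul_zero _) F := rfl

lemma bT_single (i : Fin r) (a : (Fin r ⊕ Fin r) →₀ ℕ) (v : R) :
    bT r R i (Finsupp.single a v)
      = Finsupp.single a ((X i : MvPolynomial (Fin r) ℂ) • v) := by
  rw [bT_apply, Finsupp.mapRange_single]

lemma bLam_def (i : Fin r) : bLam r R i = bShift r R (Finsupp.single (Sum.inl i) 1) := rfl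
lemma bMu_def (i : Fin r) : bMu r R i = bShift r R (Finsupp.single (Sum.inr i) 1) := rfl

lemma end_comm_apply {M : Type*} [AddCommMonoid M] [Module ℂ M] {u v : Module.End ℂ M}
    (h : Commute u v) (x : M) : u (v x) = v (u x) := by
  rw [← Module.End.mul_apply, h.eq, Module.End.mul_apply]

lemma commute_bShift_bShift (e f : (Fin r ⊕ Fin r) →₀ ℕ) :
    Commute (bShift r R e) (bShift r R f) := by
  have h : ∀ (e f : (Fin r ⊕ Fin r) →₀ ℕ),
      bShift r R e * bShift r R f = bShift r R (f + e) := by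
    intro e f
    apply Finsupp.lhom_ext
    intro a v
    simp [Module.End.mul_apply, bShift_single, add_assoc]
  unfold Commute SemiconjBy
  rw [h, h, add_comm]

lemma commute_bShift_bT (e : (Fin r ⊕ Fin r) →₀ ℕ) (i : Fin r) :
    Commute (bShift r R e) (bT r R i) := by
  unfold Commute SemiconjBy
  apply Finsupp.lhom_ext
  intro a v
  simp [Module.End.mul_apply, bShift_single, bT_single]

lemma commute_bT_bT (i j : Fin r) : Commute (bT r R i) (bT r R j) := by
  unfold Commute SemiconjBy
  apply Finsupp.lhom_ext
  intro a v
  simp only [Module.End.mul_apply, bT_single]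
  rw [← mul_smul, ← mul_smul, mul_comm]

/-- An endomorphism of `BP` commuting with all the generators. -/
def Nice (f : Module.End ℂ (BP r R)) : Prop :=
  (∀ e, Commute (bShift r R e) f) ∧ (∀ i, Commute (bT r R i) f)

lemma Nice.add {f g : Module.End ℂ (BP r R)} (hf : Nice f) (hg : Nice g) : Nice (f + g) :=
  ⟨fun e => (hf.1 e).add_right (hg.1 e), fun i => (hf.2 i).add_right (hg.2 i)⟩

lemma Nice.neg {f : Module.End ℂ (BP r R)} (hf : Nice f) : Nice (-f) :=
  ⟨fun e => (hf.1 e).neg_right, fun i => (hf.2 i).neg_right⟩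

lemma Nice.sub {f g : Module.End ℂ (BP r R)} (hf : Nice f) (hg : Nice g) : Nice (f - g) :=
  ⟨fun e => (hf.1 e).sub_right (hg.1 e), fun i => (hf.2 i).sub_right (hg.2 i)⟩

lemma nice_bShift (e : (Fin r ⊕ Fin r) →₀ ℕ) : Nice (bShift r R e) :=
  ⟨fun f => commute_bShift_bShift f e, fun i => (commute_bShift_bT e i).symm⟩

lemma nice_bT (i : Fin r) : Nice (bT r R i) :=
  ⟨fun e => commute_bShift_bT e i, fun j => commute_bT_bT j i⟩

lemma nice_bLam (i : Fin r) : Nice (bLam r R i) := nice_bShift _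
lemma nice_bMu (i : Fin r) : Nice (bMu r R i) := nice_bShift _

lemma nice_FL (i : Fin r) : Nice (FL r R i) := nice_bLam i
lemma nice_FM (i : Fin r) : Nice (FM r R i) := nice_bMu i
lemma nice_FLM (i : Fin r) : Nice (FLM r R i) := (nice_bLam i).add (nice_bMu i)
lemma nice_FNL (i : Fin r) : Nice (FNL r R i) := ((nice_bLam i).neg).sub (nice_bT i)
lemma nice_FNM (i : Fin r) : Nice (FNM r R i) := ((nice_bMu i).neg).sub (nice_bT i)
lemma nice_FNLM (i : Fin r) : Nice (FNLM r R i) :=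
  (((nice_bLam i).neg).sub (nice_bMu i)).sub (nice_bT i)

lemma Nice.commL {u : Module.End ℂ (BP r R)} (hu : Nice u) (i : Fin r) :
    Commute u (bLam r R i) := (hu.1 _).symm

lemma Nice.commM {u : Module.End ℂ (BP r R)} (hu : Nice u) (i : Fin r) :
    Commute u (bMu r R i) := (hu.1 _).symm

lemma Nice.commT {u : Module.End ℂ (BP r R)} (hu : Nice u) (i : Fin r) :
    Commute u (bT r R i) := (hu.2 i).symm

lemma Nice.commFL {u : Module.End ℂ (BP r R)} (hu : Nice u) (i : Fin r) :
    Commute u (FL r R i) := hu.commL i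
lemma Nice.commFM {u : Module.End ℂ (BP r R)} (hu : Nice u) (i : Fin r) :
    Commute u (FM r R i) := hu.commM i
lemma Nice.commFLM {u : Module.End ℂ (BP r R)} (hu : Nice u) (i : Fin r) :
    Commute u (FLM r R i) := (hu.commL i).add_right (hu.commM i)
lemma Nice.commFNL {u : Module.End ℂ (BP r R)} (hu : Nice u) (i : Fin r) :
    Commute u (FNL r R i) := ((hu.commL i).neg_right).sub_right (hu.commT i)
lemma Nice.commFNM {u : Module.End ℂ (BP r R)} (hu : Nice u) (i : Fin r) :
    Commute u (FNM r R i) := ((hu.commM i).neg_right).sub_right (hu.commT i)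
lemma Nice.commFNLM {u : Module.End ℂ (BP r R)} (hu : Nice u) (i : Fin r) :
    Commute u (FNLM r R i) :=
  (((hu.commL i).neg_right).sub_right (hu.commM i)).sub_right (hu.commT i)


/-! ### Evaluation lemmas -/

/-- Bundled version of `ev`. -/
def evH (s : Fin r → Module.End ℂ (BP r R)) : VP r R →ₗ[ℂ] BP r R :=
  Finsupp.lsum ℂ fun k => (mop s ⇑k) ∘ₗ Finsupp.lsingle 0

lemma evH_apply (s : Fin r → Module.End ℂ (BP r R)) (F : VP r R) :
    evH s F = ev r R s F := by
  rw [evH, Finsupp.lsum_apply]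
  rfl

lemma ev_zero (s : Fin r → Module.End ℂ (BP r R)) : ev r R s 0 = 0 := by
  simp only [ev, Finsupp.sum_zero_index]

lemma ev_single (s : Fin r → Module.End ℂ (BP r R)) (k : Fin r →₀ ℕ) (v : R) :
    ev r R s (Finsupp.single k v) = mop s ⇑k (Finsupp.single 0 v) := by
  simp only [ev]
  rw [Finsupp.sum_single_index]
  · rfl
  · simp

lemma ev_add (s : Fin r → Module.End ℂ (BP r R)) (F F' : VP r R) :
    ev r R s (F + F') = ev r R s F + ev r R s F' := by
  rw [← evH_apply, ← evH_apply, ← evH_apply, map_add]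

lemma ev_zsmul (s : Fin r → Module.End ℂ (BP r R)) (n : ℤ) (F : VP r R) :
    ev r R s (n • F) = n • ev r R s F := by
  rw [← evH_apply, ← evH_apply, map_zsmul]

lemma ev_neg (s : Fin r → Module.End ℂ (BP r R)) (F : VP r R) :
    ev r R s (-F) = -(ev r R s F) := by
  rw [← evH_apply, ← evH_apply, map_neg]

lemma ev_sub (s : Fin r → Module.End ℂ (BP r R)) (F F' : VP r R) :
    ev r R s (F - F') = ev r R s F - ev r R s F' := by
  rw [← evH_apply, ← evH_apply, ← evH_apply, map_sub]

lemma ev_single_zero (s : Fin r → Module.End ℂ (BP r R)) (v : R) :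
    ev r R s (Finsupp.single 0 v) = Finsupp.single 0 v := by
  rw [ev_single]
  rw [show ⇑(0 : Fin r →₀ ℕ) = fun _ => (0 : ℕ) from rfl, mop_zero]
  rfl

lemma vLam_single (i : Fin r) (k : Fin r →₀ ℕ) (v : R) :
    vLam r R i (Finsupp.single k v) = Finsupp.single (k + Finsupp.single i 1) v := by
  simp [vLam, Finsupp.lmapDomain_apply, Finsupp.mapDomain_single]

lemma vT_single (i : Fin r) (k : Fin r →₀ ℕ) (v : R) :
    vT r R i (Finsupp.single k v)
      = Finsupp.single k ((X i : MvPolynomial (Fin r) ℂ) • v) := by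
  show Finsupp.mapRange.linearMap (tAct r R i) _ = _
  rw [Finsupp.mapRange.linearMap_apply, Finsupp.mapRange_single]
  rfl

lemma ev_vLam (s : Fin r → Module.End ℂ (BP r R)) (hc : ∀ i j, Commute (s i) (s j))
    (i : Fin r) (F : VP r R) :
    ev r R s (vLam r R i F) = s i (ev r R s F) := by
  induction F using Finsupp.induction_linear with
  | zero => rw [map_zero, ev_zero, map_zero]
  | add f g hf hg => rw [map_add, ev_add, ev_add, map_add, hf, hg]
  | single k v =>
      rw [vLam_single, ev_single, ev_single]
      have h1 : ((k + Finsupp.single i 1 : Fin r →₀ ℕ) : Fin r → ℕ)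
          = fun j => k j + (if i = j then 1 else 0) := by
        ext j
        simp [Finsupp.single_apply]
      have h2 := mop_add s hc ⇑k (fun j => if i = j then 1 else 0)
      rw [h1, h2, mop_single_one, ← (commute_mop s (fun j => hc i j) ⇑k).eq,
        Module.End.mul_apply]

lemma ev_vT (s : Fin r → Module.End ℂ (BP r R)) (hT : ∀ i j, Commute (bT r R i) (s j))
    (i : Fin r) (F : VP r R) :
    ev r R s (vT r R i F) = bT r R i (ev r R s F) := by
  induction F using Finsupp.induction_linear with
  | zero => rw [map_zero, ev_zero, map_zero]
  | add f g hf hg => rw [map_add, ev_add, ev_add, map_add, hf, hg]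
  | single k v =>
      rw [vT_single, ev_single, ev_single, ← bT_single,
        end_comm_apply ((commute_mop s (fun j => hT i j) ⇑k).symm)]

lemma ev_vNeg (s : Fin r → Module.End ℂ (BP r R)) (hc : ∀ i j, Commute (s i) (s j))
    (hT : ∀ i j, Commute (bT r R i) (s j)) (F : VP r R) :
    ev r R s (vNeg r R F) = ev r R (fun i => -(s i) - bT r R i) F := by
  have hint : ∀ (i : Fin r) (x : VP r R),
      ev r R s ((-(vLam r R i) - vT r R i) x) = (-(s i) - bT r R i) (ev r R s x) := by
    intro i x
    rw [LinearMap.sub_apply, LinearMap.neg_apply, ev_sub, ev_neg, ev_vLam s hc,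
      ev_vT s hT, LinearMap.sub_apply, LinearMap.neg_apply]
  simp only [vNeg]
  rw [← evH_apply s, map_finsuppSum]
  rw [show ev r R (fun i => -(s i) - bT r R i) F
      = F.sum fun k v => mop (fun i => -(s i) - bT r R i) ⇑k (Finsupp.single 0 v) from rfl]
  apply Finsupp.sum_congr
  intro k _
  rw [evH_apply]
  exact (mop_intertwine (ev r R s) _ _ hint ⇑k _).trans (by rw [ev_single_zero])


/-! ### `evR` and `evL` lemmas -/

section PQ

variable {p : R → R → VP r R}

lemma p_zero_r (hbil : Bilin r R p) (x : R) : p x 0 = 0 := by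
  rw [show (0 : R) = (0 : ℂ) • (0 : R) by simp, hbil.2.2.2, zero_smul]

lemma p_zero_l (hbil : Bilin r R p) (x : R) : p 0 x = 0 := by
  rw [show (0 : R) = (0 : ℂ) • (0 : R) by simp, hbil.2.2.1, zero_smul]

lemma evR_add (hbil : Bilin r R p) (s : Fin r → Module.End ℂ (BP r R)) (x : R) (G G' : BP r R) :
    evR r R p s x (G + G') = evR r R p s x G + evR r R p s x G' := by
  simp only [evR]
  apply Finsupp.sum_add_index'
  · intro e
    rw [p_zero_r hbil, ev_zero, map_zero]
  · intro e w w'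
    rw [hbil.2.1, ev_add, map_add]

/-- Bundled version of `evR`. -/
def evRA (hbil : Bilin r R p) (s : Fin r → Module.End ℂ (BP r R)) (x : R) : BP r R →+ BP r R :=
  AddMonoidHom.mk' (evR r R p s x) (evR_add hbil s x)

lemma evRA_apply (hbil : Bilin r R p) (s : Fin r → Module.End ℂ (BP r R)) (x : R) (G : BP r R) :
    evRA hbil s x G = evR r R p s x G := rfl

lemma evR_zsmul (hbil : Bilin r R p) (s : Fin r → Module.End ℂ (BP r R)) (x : R) (n : ℤ) (G : BP r R) :
    evR r R p s x (n • G) = n • evR r R p s x G :=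
  map_zsmul (evRA hbil s x) n G

lemma evR_neg (hbil : Bilin r R p) (s : Fin r → Module.End ℂ (BP r R)) (x : R) (G : BP r R) :
    evR r R p s x (-G) = -(evR r R p s x G) :=
  map_neg (evRA hbil s x) G

lemma evR_sub (hbil : Bilin r R p) (s : Fin r → Module.End ℂ (BP r R)) (x : R) (G G' : BP r R) :
    evR r R p s x (G - G') = evR r R p s x G - evR r R p s x G' :=
  map_sub (evRA hbil s x) G G'

lemma evR_single (hbil : Bilin r R p) (s : Fin r → Module.End ℂ (BP r R)) (x : R)
    (e : (Fin r ⊕ Fin r) →₀ ℕ) (w : R) :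
    evR r R p s x (Finsupp.single e w) = bShift r R e (ev r R s (p x w)) := by
  simp only [evR]
  apply Finsupp.sum_single_index
  rw [p_zero_r hbil, ev_zero, map_zero]

lemma bShift_comp (e f : (Fin r ⊕ Fin r) →₀ ℕ) (y : BP r R) :
    bShift r R f (bShift r R e y) = bShift r R (e + f) y := by
  have h : (bShift r R f) ∘ₗ (bShift r R e) = bShift r R (e + f) := by
    apply Finsupp.lhom_ext
    intro a v
    simp [bShift_single, add_assoc]
  exact LinearMap.congr_fun h y

lemma bShift_zero (y : BP r R) : bShift r R 0 y = y := by
  have h : (bShift r R (0 : (Fin r ⊕ Fin r) →₀ ℕ)) = LinearMap.id := by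
    apply Finsupp.lhom_ext
    intro a v
    simp [bShift_single]
  rw [h]
  rfl

lemma evR_bShift (hbil : Bilin r R p) (s : Fin r → Module.End ℂ (BP r R)) (x : R)
    (f : (Fin r ⊕ Fin r) →₀ ℕ) (G : BP r R) :
    evR r R p s x (bShift r R f G) = bShift r R f (evR r R p s x G) := by
  have hG : bShift r R f G = Finsupp.mapDomain (· + f) G := by
    simp [bShift, Finsupp.lmapDomain_apply]
  rw [hG]
  simp only [evR]
  rw [Finsupp.sum_mapDomain_index
    (fun e => by rw [p_zero_r hbil, ev_zero, map_zero])
    (fun e w w' => by rw [hbil.2.1, ev_add, map_add]),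
    map_finsuppSum (bShift r R f)]
  apply Finsupp.sum_congr
  intro e _
  rw [bShift_comp]

lemma evR_bLam (hbil : Bilin r R p) (s : Fin r → Module.End ℂ (BP r R)) (x : R) (i : Fin r) (G : BP r R) :
    evR r R p s x (bLam r R i G) = bLam r R i (evR r R p s x G) :=
  evR_bShift hbil s x _ G

lemma evR_bMu (hbil : Bilin r R p) (s : Fin r → Module.End ℂ (BP r R)) (x : R) (i : Fin r) (G : BP r R) :
    evR r R p s x (bMu r R i G) = bMu r R i (evR r R p s x G) :=
  evR_bShift hbil s x _ G

lemma evR_bT (hbil : Bilin r R p) (hses : Sesq r R p) (s : Fin r → Module.End ℂ (BP r R))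
    (hc : ∀ i j, Commute (s i) (s j)) (hT : ∀ i j, Commute (bT r R i) (s j))
    (hS : ∀ e j, Commute (bShift r R e) (s j))
    (x : R) (i : Fin r) (G : BP r R) :
    evR r R p s x (bT r R i G) = bT r R i (evR r R p s x G) + s i (evR r R p s x G) := by
  rw [bT_apply]
  simp only [evR]
  rw [Finsupp.sum_mapRange_index (fun e => by rw [p_zero_r hbil, ev_zero, map_zero])]
  have key : ∀ (e : (Fin r ⊕ Fin r) →₀ ℕ) (w : R),
      bShift r R e (ev r R s (p x ((X i : MvPolynomial (Fin r) ℂ) • w)))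
        = ((bT r R i + s i) : Module.End ℂ (BP r R)) (bShift r R e (ev r R s (p x w))) := by
    intro e w
    rw [(hses i x w).2, LinearMap.add_apply, ev_add, ev_vT s hT, ev_vLam s hc, map_add,
      LinearMap.add_apply]
    congr 1
    · exact end_comm_apply (commute_bShift_bT e i) _
    · exact end_comm_apply (hS e i) _
  have h1 := Finsupp.sum_congr (f := G)
    (g1 := fun e w => bShift r R e (ev r R s (p x ((X i : MvPolynomial (Fin r) ℂ) • w))))
    (g2 := fun e w => ((bT r R i + s i) : Module.End ℂ (BP r R))
      (bShift r R e (ev r R s (p x w))))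
    (fun e _ => key e (G e))
  have h2 : (G.sum fun e w => ((bT r R i + s i) : Module.End ℂ (BP r R))
      (bShift r R e (ev r R s (p x w))))
      = ((bT r R i + s i) : Module.End ℂ (BP r R))
        (G.sum fun e w => bShift r R e (ev r R s (p x w))) :=
    (map_finsuppSum ((bT r R i + s i) : Module.End ℂ (BP r R)) G _).symm
  rw [h1, h2, LinearMap.add_apply]

lemma evL_add (hbil : Bilin r R p) (s : Fin r → Module.End ℂ (BP r R)) (z : R) (F F' : BP r R) :
    evL r R p s (F + F') z = evL r R p s F z + evL r R p s F' z := by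
  simp only [evL]
  apply Finsupp.sum_add_index'
  · intro e
    rw [p_zero_l hbil, ev_zero, map_zero]
  · intro e w w'
    rw [hbil.1, ev_add, map_add]

/-- Bundled version of `evL`. -/
def evLA (hbil : Bilin r R p) (s : Fin r → Module.End ℂ (BP r R)) (z : R) : BP r R →+ BP r R :=
  AddMonoidHom.mk' (fun F => evL r R p s F z) (fun F F' => evL_add hbil s z F F')

lemma evL_zsmul (hbil : Bilin r R p) (s : Fin r → Module.End ℂ (BP r R)) (z : R) (n : ℤ) (F : BP r R) :
    evL r R p s (n • F) z = n • evL r R p s F z :=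
  map_zsmul (evLA hbil s z) n F

lemma evL_neg (hbil : Bilin r R p) (s : Fin r → Module.End ℂ (BP r R)) (z : R) (F : BP r R) :
    evL r R p s (-F) z = -(evL r R p s F z) :=
  map_neg (evLA hbil s z) F

lemma evL_sub (hbil : Bilin r R p) (s : Fin r → Module.End ℂ (BP r R)) (z : R) (F F' : BP r R) :
    evL r R p s (F - F') z = evL r R p s F z - evL r R p s F' z :=
  map_sub (evLA hbil s z) F F'

lemma evL_single (hbil : Bilin r R p) (s : Fin r → Module.End ℂ (BP r R)) (z : R)
    (e : (Fin r ⊕ Fin r) →₀ ℕ) (w : R) :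
    evL r R p s (Finsupp.single e w) z = bShift r R e (ev r R s (p w z)) := by
  simp only [evL]
  apply Finsupp.sum_single_index
  rw [p_zero_l hbil, ev_zero, map_zero]

lemma evL_bShift (hbil : Bilin r R p) (s : Fin r → Module.End ℂ (BP r R)) (z : R)
    (f : (Fin r ⊕ Fin r) →₀ ℕ) (F : BP r R) :
    evL r R p s (bShift r R f F) z = bShift r R f (evL r R p s F z) := by
  have hF : bShift r R f F = Finsupp.mapDomain (· + f) F := by
    simp [bShift, Finsupp.lmapDomain_apply]
  rw [hF]
  simp only [evL]
  rw [Finsupp.sum_mapDomain_index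
    (fun e => by rw [p_zero_l hbil, ev_zero, map_zero])
    (fun e w w' => by rw [hbil.1, ev_add, map_add]),
    map_finsuppSum (bShift r R f)]
  apply Finsupp.sum_congr
  intro e _
  rw [bShift_comp]

lemma evL_bLam (hbil : Bilin r R p) (s : Fin r → Module.End ℂ (BP r R)) (z : R) (i : Fin r) (F : BP r R) :
    evL r R p s (bLam r R i F) z = bLam r R i (evL r R p s F z) :=
  evL_bShift hbil s z _ F

lemma evL_bMu (hbil : Bilin r R p) (s : Fin r → Module.End ℂ (BP r R)) (z : R) (i : Fin r) (F : BP r R) :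
    evL r R p s (bMu r R i F) z = bMu r R i (evL r R p s F z) :=
  evL_bShift hbil s z _ F

lemma evL_bT (hbil : Bilin r R p) (hses : Sesq r R p) (s : Fin r → Module.End ℂ (BP r R))
    (hc : ∀ i j, Commute (s i) (s j)) (hS : ∀ e j, Commute (bShift r R e) (s j))
    (z : R) (i : Fin r) (F : BP r R) :
    evL r R p s (bT r R i F) z = -(s i (evL r R p s F z)) := by
  rw [bT_apply]
  simp only [evL]
  rw [Finsupp.sum_mapRange_index (fun e => by rw [p_zero_l hbil, ev_zero, map_zero])]
  have key : ∀ (e : (Fin r ⊕ Fin r) →₀ ℕ) (w : R),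
      bShift r R e (ev r R s (p ((X i : MvPolynomial (Fin r) ℂ) • w) z))
        = ((-(s i)) : Module.End ℂ (BP r R)) (bShift r R e (ev r R s (p w z))) := by
    intro e w
    rw [(hses i w z).1, LinearMap.neg_apply, ev_neg, ev_vLam s hc, map_neg,
      LinearMap.neg_apply]
    congr 1
    exact end_comm_apply (hS e i) _
  have h1 := Finsupp.sum_congr (f := F)
    (g1 := fun e w => bShift r R e (ev r R s (p ((X i : MvPolynomial (Fin r) ℂ) • w) z)))
    (g2 := fun e w => ((-(s i)) : Module.End ℂ (BP r R))
      (bShift r R e (ev r R s (p w z))))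
    (fun e _ => key e (F e))
  have h2 : (F.sum fun e w => ((-(s i)) : Module.End ℂ (BP r R))
      (bShift r R e (ev r R s (p w z))))
      = ((-(s i)) : Module.End ℂ (BP r R))
        (F.sum fun e w => bShift r R e (ev r R s (p w z))) :=
    (map_finsuppSum ((-(s i)) : Module.End ℂ (BP r R)) F _).symm
  rw [h1, h2, LinearMap.neg_apply]

/-! ### Normal forms `eRR` and `eLL` and conversions -/

/-- `F.sum fun k v => t^k ((p x v)(s))`. -/
def eRR (p : R → R → VP r R) (t s : Fin r → Module.End ℂ (BP r R)) (x : R) (F : VP r R) :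
    BP r R :=
  F.sum fun k v => mop t ⇑k (ev r R s (p x v))

/-- `F.sum fun k v => t^k ((p v z)(s))`. -/
def eLL (p : R → R → VP r R) (t s : Fin r → Module.End ℂ (BP r R)) (F : VP r R) (z : R) :
    BP r R :=
  F.sum fun k v => mop t ⇑k (ev r R s (p v z))

lemma conv_evR (hbil : Bilin r R p) (s t u : Fin r → Module.End ℂ (BP r R)) (x : R)
    (hI : ∀ i y, evR r R p s x (t i y) = u i (evR r R p s x y)) (F : VP r R) :
    evR r R p s x (ev r R t F) = eRR p u s x F := by
  rw [show ev r R t F = F.sum fun k v => mop t ⇑k (Finsupp.single 0 v) from rfl,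
    show evR r R p s x (F.sum fun k v => mop t ⇑k (Finsupp.single 0 v))
      = F.sum fun k v => evR r R p s x (mop t ⇑k (Finsupp.single 0 v)) from
      map_finsuppSum (evRA hbil s x) _ _]
  simp only [eRR]
  apply Finsupp.sum_congr
  intro k _
  rw [mop_intertwine (evR r R p s x) t u hI ⇑k, evR_single hbil, bShift_zero]

lemma conv_evL (hbil : Bilin r R p) (s t u : Fin r → Module.End ℂ (BP r R)) (z : R)
    (hI : ∀ i y, evL r R p s (t i y) z = u i (evL r R p s y z)) (F : VP r R) :
    evL r R p s (ev r R t F) z = eLL p u s F z := by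
  rw [show ev r R t F = F.sum fun k v => mop t ⇑k (Finsupp.single 0 v) from rfl,
    show evL r R p s (F.sum fun k v => mop t ⇑k (Finsupp.single 0 v)) z
      = F.sum fun k v => evL r R p s (mop t ⇑k (Finsupp.single 0 v)) z from
      map_finsuppSum (evLA hbil s z) _ _]
  simp only [eLL]
  apply Finsupp.sum_congr
  intro k _
  rw [mop_intertwine (fun y => evL r R p s y z) t u hI ⇑k, evL_single hbil, bShift_zero]

end PQ

/-! ### The substitution operator `phi` -/

/-- Substitution `λ ↦ σ`, `μ ↦ τ` on `BP`. -/
def phi (σ τ : Fin r → Module.End ℂ (BP r R)) (F : BP r R) : BP r R :=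
  F.sum fun e v => mop σ (fun i => e (Sum.inl i))
    (mop τ (fun i => e (Sum.inr i)) (Finsupp.single 0 v))

lemma phi_single (σ τ : Fin r → Module.End ℂ (BP r R)) (e : (Fin r ⊕ Fin r) →₀ ℕ) (v : R) :
    phi σ τ (Finsupp.single e v) = mop σ (fun i => e (Sum.inl i))
      (mop τ (fun i => e (Sum.inr i)) (Finsupp.single 0 v)) := by
  simp only [phi]
  apply Finsupp.sum_single_index
  simp

lemma phi_add (σ τ : Fin r → Module.End ℂ (BP r R)) (F F' : BP r R) :
    phi σ τ (F + F') = phi σ τ F + phi σ τ F' := by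
  simp only [phi]
  apply Finsupp.sum_add_index'
  · intro e; simp
  · intro e w w'
    rw [Finsupp.single_add, map_add, map_add]

/-- Bundled version of `phi`. -/
def phiA (σ τ : Fin r → Module.End ℂ (BP r R)) : BP r R →+ BP r R :=
  AddMonoidHom.mk' (phi σ τ) (phi_add σ τ)

lemma phi_zsmul (σ τ : Fin r → Module.End ℂ (BP r R)) (n : ℤ) (F : BP r R) :
    phi σ τ (n • F) = n • phi σ τ F := map_zsmul (phiA σ τ) n F

lemma phi_sub (σ τ : Fin r → Module.End ℂ (BP r R)) (F F' : BP r R) :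
    phi σ τ (F - F') = phi σ τ F - phi σ τ F' := map_sub (phiA σ τ) F F'

lemma phi_single_zero (σ τ : Fin r → Module.End ℂ (BP r R)) (v : R) :
    phi σ τ (Finsupp.single 0 v) = Finsupp.single 0 v := by
  rw [phi_single]
  rw [show (fun i => (0 : (Fin r ⊕ Fin r) →₀ ℕ) (Sum.inl i)) = fun _ : Fin r => (0:ℕ) from rfl,
    show (fun i => (0 : (Fin r ⊕ Fin r) →₀ ℕ) (Sum.inr i)) = fun _ : Fin r => (0:ℕ) from rfl,
    mop_zero, mop_zero]
  rfl

lemma phi_bLam (σ τ : Fin r → Module.End ℂ (BP r R))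
    (hσ : ∀ i j, Commute (σ i) (σ j))
    (i : Fin r) (y : BP r R) :
    phi σ τ (bLam r R i y) = σ i (phi σ τ y) := by
  induction y using Finsupp.induction_linear with
  | zero => rw [map_zero, show phi σ τ 0 = 0 from Finsupp.sum_zero_index, map_zero]
  | add f g hf hg => rw [map_add, phi_add, phi_add, map_add, hf, hg]
  | single e v =>
      rw [bLam_def, bShift_single, phi_single, phi_single]
      have hL : (fun j => (e + Finsupp.single (Sum.inl i) 1 : (Fin r ⊕ Fin r) →₀ ℕ) (Sum.inl j))
          = fun j => e (Sum.inl j) + (if i = j then 1 else 0) := by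
        ext j
        simp [Finsupp.add_apply, Finsupp.single_apply]
      have hR : (fun j => (e + Finsupp.single (Sum.inl i) 1 : (Fin r ⊕ Fin r) →₀ ℕ) (Sum.inr j))
          = fun j => e (Sum.inr j) := by
        ext j
        simp [Finsupp.add_apply, Finsupp.single_apply]
      rw [hL, hR, mop_add σ hσ _ _, mop_single_one,
        ← (commute_mop σ (fun j => hσ i j) _).eq, Module.End.mul_apply]

lemma phi_bMu (σ τ : Fin r → Module.End ℂ (BP r R))
    (hτ : ∀ i j, Commute (τ i) (τ j)) (hστ : ∀ i j, Commute (σ i) (τ j))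
    (i : Fin r) (y : BP r R) :
    phi σ τ (bMu r R i y) = τ i (phi σ τ y) := by
  induction y using Finsupp.induction_linear with
  | zero => rw [map_zero, show phi σ τ 0 = 0 from Finsupp.sum_zero_index, map_zero]
  | add f g hf hg => rw [map_add, phi_add, phi_add, map_add, hf, hg]
  | single e v =>
      rw [bMu_def, bShift_single, phi_single, phi_single]
      have hL : (fun j => (e + Finsupp.single (Sum.inr i) 1 : (Fin r ⊕ Fin r) →₀ ℕ) (Sum.inl j))
          = fun j => e (Sum.inl j) := by
        ext j
        simp [Finsupp.add_apply, Finsupp.single_apply]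
      have hR : (fun j => (e + Finsupp.single (Sum.inr i) 1 : (Fin r ⊕ Fin r) →₀ ℕ) (Sum.inr j))
          = fun j => e (Sum.inr j) + (if i = j then 1 else 0) := by
        ext j
        simp [Finsupp.add_apply, Finsupp.single_apply]
      rw [hL, hR, mop_add τ hτ _ _, mop_single_one,
        ← (commute_mop τ (fun j => hτ i j) _).eq, Module.End.mul_apply,
        end_comm_apply ((commute_mop σ (fun j => (hστ j i).symm) _)) _]

lemma phi_bT (σ τ : Fin r → Module.End ℂ (BP r R))
    (hTσ : ∀ i j, Commute (bT r R i) (σ j)) (hTτ : ∀ i j, Commute (bT r R i) (τ j))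
    (i : Fin r) (y : BP r R) :
    phi σ τ (bT r R i y) = bT r R i (phi σ τ y) := by
  induction y using Finsupp.induction_linear with
  | zero => rw [map_zero, show phi σ τ 0 = 0 from Finsupp.sum_zero_index, map_zero]
  | add f g hf hg => rw [map_add, phi_add, phi_add, map_add, hf, hg]
  | single e v =>
      rw [bT_single, phi_single, phi_single, ← bT_single,
        end_comm_apply ((commute_mop τ (fun j => hTτ i j) _).symm) _,
        end_comm_apply ((commute_mop σ (fun j => hTσ i j) _).symm) _]

lemma phi_ev (σ τ s s' : Fin r → Module.End ℂ (BP r R))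
    (hS : ∀ i y, phi σ τ (s i y) = s' i (phi σ τ y)) (X : VP r R) :
    phi σ τ (ev r R s X) = ev r R s' X := by
  rw [show ev r R s X = X.sum fun k v => mop s ⇑k (Finsupp.single 0 v) from rfl,
    show phi σ τ (X.sum fun k v => mop s ⇑k (Finsupp.single 0 v))
      = X.sum fun k v => phi σ τ (mop s ⇑k (Finsupp.single 0 v)) from
      map_finsuppSum (phiA σ τ) _ _,
    show ev r R s' X = X.sum fun k v => mop s' ⇑k (Finsupp.single 0 v) from rfl]
  apply Finsupp.sum_congr
  intro k _
  rw [mop_intertwine (phi σ τ) s s' hS ⇑k, phi_single_zero]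

lemma phi_eRR (σ τ t s t' s' : Fin r → Module.End ℂ (BP r R)) (p : R → R → VP r R)
    (hT : ∀ i y, phi σ τ (t i y) = t' i (phi σ τ y))
    (hS : ∀ i y, phi σ τ (s i y) = s' i (phi σ τ y)) (x : R) (F : VP r R) :
    phi σ τ (eRR p t s x F) = eRR p t' s' x F := by
  simp only [eRR]
  rw [show phi σ τ (F.sum fun k v => mop t ⇑k (ev r R s (p x v)))
      = F.sum fun k v => phi σ τ (mop t ⇑k (ev r R s (p x v))) from
      map_finsuppSum (phiA σ τ) _ _]
  apply Finsupp.sum_congr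
  intro k _
  rw [mop_intertwine (phi σ τ) t t' hT ⇑k, phi_ev σ τ s s' hS]

lemma phi_eLL (σ τ t s t' s' : Fin r → Module.End ℂ (BP r R)) (p : R → R → VP r R)
    (hT : ∀ i y, phi σ τ (t i y) = t' i (phi σ τ y))
    (hS : ∀ i y, phi σ τ (s i y) = s' i (phi σ τ y)) (z : R) (F : VP r R) :
    phi σ τ (eLL p t s F z) = eLL p t' s' F z := by
  simp only [eLL]
  rw [show phi σ τ (F.sum fun k v => mop t ⇑k (ev r R s (p v z)))
      = F.sum fun k v => phi σ τ (mop t ⇑k (ev r R s (p v z))) from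
      map_finsuppSum (phiA σ τ) _ _]
  apply Finsupp.sum_congr
  intro k _
  rw [mop_intertwine (phi σ τ) t t' hT ⇑k, phi_ev σ τ s s' hS]

/-! ### Parity support -/

/-- All coefficients of `F` lie in `N`. -/
def SuppIn {κ : Type*} (N : Submodule ℂ R) (F : κ →₀ R) : Prop := ∀ k, F k ∈ N

lemma suppIn_single {κ : Type*} (N : Submodule ℂ R) (a : κ) {v : R} (hv : v ∈ N) :
    SuppIn N (Finsupp.single a v) := by
  classical
  intro k
  rw [Finsupp.single_apply]
  split
  · exact hv
  · exact N.zero_mem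

lemma suppIn_sum {κ ι M : Type*} [Zero M] (N : Submodule ℂ R) (F : ι →₀ M)
    (g : ι → M → (κ →₀ R)) (h : ∀ a ∈ F.support, SuppIn N (g a (F a))) :
    SuppIn N (F.sum g) := by
  intro k
  rw [Finsupp.sum_apply, Finsupp.sum]
  exact Submodule.sum_mem N fun c hc => h c hc k

lemma suppIn_mapDomain {κ κ' : Type*} (N : Submodule ℂ R) (f : κ → κ') (F : κ →₀ R)
    (h : SuppIn N F) : SuppIn N (Finsupp.mapDomain f F) := by
  rw [Finsupp.mapDomain]
  exact suppIn_sum N F _ fun a _ => suppIn_single N _ (h a)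

lemma suppIn_bShift (N : Submodule ℂ R) (e : (Fin r ⊕ Fin r) →₀ ℕ) (F : BP r R)
    (h : SuppIn N F) : SuppIn N (bShift r R e F) := by
  have : bShift r R e F = Finsupp.mapDomain (· + e) F := by
    simp [bShift, Finsupp.lmapDomain_apply]
  rw [this]
  exact suppIn_mapDomain N _ F h

lemma suppIn_bT (N : Submodule ℂ R)
    (hN : ∀ (i : Fin r) (v : R), v ∈ N → (X i : MvPolynomial (Fin r) ℂ) • v ∈ N)
    (i : Fin r) (F : BP r R) (h : SuppIn N F) : SuppIn N (bT r R i F) := by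
  intro k
  rw [bT_apply, Finsupp.mapRange_apply]
  exact hN i _ (h k)

lemma suppIn_add {κ : Type*} (N : Submodule ℂ R) {F F' : κ →₀ R}
    (h : SuppIn N F) (h' : SuppIn N F') : SuppIn N (F + F') := by
  intro k
  rw [Finsupp.add_apply]
  exact N.add_mem (h k) (h' k)

lemma suppIn_neg {κ : Type*} (N : Submodule ℂ R) {F : κ →₀ R}
    (h : SuppIn N F) : SuppIn N (-F) := by
  intro k
  rw [Finsupp.neg_apply]
  exact N.neg_mem (h k)

lemma suppIn_sub {κ : Type*} (N : Submodule ℂ R) {F F' : κ →₀ R}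
    (h : SuppIn N F) (h' : SuppIn N F') : SuppIn N (F - F') := by
  intro k
  rw [Finsupp.sub_apply]
  exact N.sub_mem (h k) (h' k)

lemma suppIn_listprod (N : Submodule ℂ R) :
    ∀ (l : List (Module.End ℂ (BP r R))),
      (∀ g ∈ l, ∀ F, SuppIn N F → SuppIn N (g F)) →
      ∀ (F : BP r R), SuppIn N F → SuppIn N (l.prod F)
  | [], _, F, h => by simpa using h
  | (a :: l), hl, F, h => by
      rw [List.prod_cons, Module.End.mul_apply]
      exact hl a (List.mem_cons_self (a := a) (l := l)) _
        (suppIn_listprod N l (fun g hg => hl g (List.mem_cons_of_mem a hg)) F h)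

lemma suppIn_pow (N : Submodule ℂ R) {g : Module.End ℂ (BP r R)}
    (hg : ∀ F, SuppIn N F → SuppIn N (g F)) :
    ∀ (m : ℕ) (F : BP r R), SuppIn N F → SuppIn N ((g ^ m) F)
  | 0, F, h => by simpa using h
  | (m+1), F, h => by
      rw [pow_succ, Module.End.mul_apply]
      exact suppIn_pow N hg m _ (hg F h)

lemma suppIn_mop (N : Submodule ℂ R) (s : Fin r → Module.End ℂ (BP r R))
    (hs : ∀ j (F : BP r R), SuppIn N F → SuppIn N (s j F)) (k : Fin r → ℕ)
    (F : BP r R) (h : SuppIn N F) : SuppIn N (mop s k F) := by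
  apply suppIn_listprod N _ _ F h
  intro g hg
  rw [List.mem_ofFn] at hg
  obtain ⟨i, rfl⟩ := hg
  exact fun F h => suppIn_pow N (hs i) (k i) F h

lemma suppIn_ev (N : Submodule ℂ R) (s : Fin r → Module.End ℂ (BP r R))
    (hs : ∀ j (F : BP r R), SuppIn N F → SuppIn N (s j F)) (F : VP r R)
    (hF : ∀ k, F k ∈ N) : SuppIn N (ev r R s F) := by
  rw [show ev r R s F = F.sum fun k v => mop s ⇑k (Finsupp.single 0 v) from rfl]
  exact suppIn_sum N F _ fun a _ => suppIn_mop N s hs _ _ (suppIn_single N _ (hF a))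

lemma suppIn_fam (N : Submodule ℂ R)
    (hN : ∀ (i : Fin r) (v : R), v ∈ N → (X i : MvPolynomial (Fin r) ℂ) • v ∈ N)
    (s : Fin r → Module.End ℂ (BP r R))
    (hfam : s = FL r R ∨ s = FM r R ∨ s = FLM r R ∨ s = FNL r R ∨ s = FNM r R ∨
      s = FNLM r R) :
    ∀ j (F : BP r R), SuppIn N F → SuppIn N (s j F) := by
  have hL : ∀ j (F : BP r R), SuppIn N F → SuppIn N (bLam r R j F) := by
    intro j F h
    rw [bLam_def]
    exact suppIn_bShift N _ F h
  have hM : ∀ j (F : BP r R), SuppIn N F → SuppIn N (bMu r R j F) := by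
    intro j F h
    rw [bMu_def]
    exact suppIn_bShift N _ F h
  have hT := suppIn_bT N hN
  rcases hfam with rfl | rfl | rfl | rfl | rfl | rfl
  · exact hL
  · exact hM
  · intro j F h
    rw [show FLM r R j F = bLam r R j F + bMu r R j F from rfl]
    exact suppIn_add N (hL j F h) (hM j F h)
  · intro j F h
    rw [show FNL r R j F = -(bLam r R j F) - bT r R j F from rfl]
    exact suppIn_sub N (suppIn_neg N (hL j F h)) (hT j F h)
  · intro j F h
    rw [show FNM r R j F = -(bMu r R j F) - bT r R j F from rfl]
    exact suppIn_sub N (suppIn_neg N (hM j F h)) (hT j F h)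
  · intro j F h
    rw [show FNLM r R j F = -(bLam r R j F) - bMu r R j F - bT r R j F from rfl]
    exact suppIn_sub N (suppIn_sub N (suppIn_neg N (hL j F h)) (hM j F h)) (hT j F h)

/-! ### Expansion of the star product -/

lemma expandR {G : ZMod 2 → Submodule ℂ R} {s p : R → R → VP r R}
    (hdef : ∀ (α β : ZMod 2) (a b : R), a ∈ G α → b ∈ G β →
      s a b = p a b + sgn α β • vNeg r R (p b a))
    (ρ ρbar : Fin r → Module.End ℂ (BP r R))
    (hneg : ∀ F, ev r R ρ (vNeg r R F) = ev r R ρbar F)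
    {δx δ : ZMod 2} {x : R} (hx : x ∈ G δx) (Gp : BP r R) (hGc : ∀ k, Gp k ∈ G δ) :
    evR r R s ρ x Gp = evR r R p ρ x Gp + sgn δx δ • evL r R p ρbar Gp x := by
  simp only [evR, evL]
  rw [Finsupp.smul_sum, ← Finsupp.sum_add]
  apply Finsupp.sum_congr
  intro e _
  rw [hdef δx δ x (Gp e) hx (hGc e), ev_add, ev_zsmul, hneg, map_add, map_zsmul]

lemma expandL {G : ZMod 2 → Submodule ℂ R} {s p : R → R → VP r R}
    (hdef : ∀ (α β : ZMod 2) (a b : R), a ∈ G α → b ∈ G β →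
      s a b = p a b + sgn α β • vNeg r R (p b a))
    (ρ ρbar : Fin r → Module.End ℂ (BP r R))
    (hneg : ∀ F, ev r R ρ (vNeg r R F) = ev r R ρbar F)
    {δz δ : ZMod 2} {z : R} (hz : z ∈ G δz) (F : BP r R) (hFc : ∀ k, F k ∈ G δ) :
    evL r R s ρ F z = evL r R p ρ F z + sgn δ δz • evR r R p ρbar z F := by
  simp only [evR, evL]
  rw [Finsupp.smul_sum, ← Finsupp.sum_add]
  apply Finsupp.sum_congr
  intro e _
  rw [hdef δ δz (F e) z (hFc e) hz, ev_add, ev_zsmul, hneg, map_add, map_zsmul]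

/-! ### Sign lemmas -/

lemma sgn_sq (α β : ZMod 2) : sgn α β * sgn α β = 1 := by
  revert α β
  decide

lemma sgn_comm (α β : ZMod 2) : sgn α β = sgn β α := by
  revert α β
  decide

lemma sgn_add_right (α β γ : ZMod 2) : sgn α (β + γ) = sgn α β * sgn α γ := by
  revert α β γ
  decide

lemma sgn_add_left (α β γ : ZMod 2) : sgn (α + β) γ = sgn α γ * sgn β γ := by
  revert α β γ
  decide

end AuxCA

/-- Let `(R, ∘_λ)` be an `r`-dimensional right Novikov conformal
superalgebra and define `a ∗_λ b = a ∘_λ b + (−1)^{αβ} b ∘_{−λ−T} a` on homogeneous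
elements. Then for all homogeneous `a, b, c` (with `a, b` of parities `α, β`):
`a ∗_λ (b ∗_μ c) + 2 (a ∘_λ b) ∗_{λ+μ} c − (a ∗_λ b) ∗_{λ+μ} c
  − (−1)^{αβ} b ∗_μ (a ∗_λ c) = 0`. -/
theorem statement_16 (r : ℕ) (R : Type*) [AddCommGroup R] [Module ℂ R]
    [Module (MvPolynomial (Fin r) ℂ) R] [IsScalarTower ℂ (MvPolynomial (Fin r) ℂ) R]
    (G : ZMod 2 → Submodule ℂ R) (hG : IsGraded r R G)
    (p : R → R → VP r R) (hp : IsNovRight r R G p)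
    (s : R → R → VP r R) (hs : Bilin r R s)
    (hdef : ∀ (α β : ZMod 2) (a b : R), a ∈ G α → b ∈ G β →
      s a b = p a b + sgn α β • vNeg r R (p b a)) :
    ∀ (α β γ : ZMod 2) (a b c : R), a ∈ G α → b ∈ G β → c ∈ G γ →
      evR r R s (FL r R) a (ev r R (FM r R) (s b c)) +
      (2 : ℤ) • evL r R s (FLM r R) (ev r R (FL r R) (p a b)) c -
      evL r R s (FLM r R) (ev r R (FL r R) (s a b)) c -
      sgn α β • evR r R s (FM r R) b (ev r R (FL r R) (s a c)) = 0 := by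
  intro α β γ a b c ha hb hc
  classical
  obtain ⟨hpbil, hppar, hpses, hpN1, hpN2⟩ := hp
  -- commutation facts
  have cP_FL : ∀ i j, Commute (FL r R i) (FL r R j) := fun i j => (nice_FL i).commFL j
  have cT_FL : ∀ i j, Commute (bT r R i) (FL r R j) := fun i j => (nice_bT i).commFL j
  have cS_FL : ∀ e j, Commute (bShift r R e) (FL r R j) := fun e j => (nice_bShift e).commFL j
  have cP_FM : ∀ i j, Commute (FM r R i) (FM r R j) := fun i j => (nice_FM i).commFM j
  have cT_FM : ∀ i j, Commute (bT r R i) (FM r R j) := fun i j => (nice_bT i).commFM j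
  have cS_FM : ∀ e j, Commute (bShift r R e) (FM r R j) := fun e j => (nice_bShift e).commFM j
  have cP_FLM : ∀ i j, Commute (FLM r R i) (FLM r R j) := fun i j => (nice_FLM i).commFLM j
  have cT_FLM : ∀ i j, Commute (bT r R i) (FLM r R j) := fun i j => (nice_bT i).commFLM j
  have cS_FLM : ∀ e j, Commute (bShift r R e) (FLM r R j) :=
    fun e j => (nice_bShift e).commFLM j
  have cP_FNL : ∀ i j, Commute (FNL r R i) (FNL r R j) := fun i j => (nice_FNL i).commFNL j
  have cT_FNL : ∀ i j, Commute (bT r R i) (FNL r R j) := fun i j => (nice_bT i).commFNL j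
  have cS_FNL : ∀ e j, Commute (bShift r R e) (FNL r R j) :=
    fun e j => (nice_bShift e).commFNL j
  have cP_FNM : ∀ i j, Commute (FNM r R i) (FNM r R j) := fun i j => (nice_FNM i).commFNM j
  have cT_FNM : ∀ i j, Commute (bT r R i) (FNM r R j) := fun i j => (nice_bT i).commFNM j
  have cS_FNM : ∀ e j, Commute (bShift r R e) (FNM r R j) :=
    fun e j => (nice_bShift e).commFNM j
  have cP_FNLM : ∀ i j, Commute (FNLM r R i) (FNLM r R j) :=
    fun i j => (nice_FNLM i).commFNLM j
  have cT_FNLM : ∀ i j, Commute (bT r R i) (FNLM r R j) := fun i j => (nice_bT i).commFNLM j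
  have cS_FNLM : ∀ e j, Commute (bShift r R e) (FNLM r R j) :=
    fun e j => (nice_bShift e).commFNLM j
  have cFM_FNLM : ∀ i j, Commute (FM r R i) (FNLM r R j) := fun i j => (nice_FM i).commFNLM j
  have cFNLM_FL : ∀ i j, Commute (FNLM r R i) (FL r R j) := fun i j => (nice_FNLM i).commFL j
  -- substitution `λ ↦ -λ-T` etc.
  have hnegFL : ∀ F, ev r R (FL r R) (vNeg r R F) = ev r R (FNL r R) F :=
    fun F => ev_vNeg (FL r R) cP_FL cT_FL F
  have hnegFM : ∀ F, ev r R (FM r R) (vNeg r R F) = ev r R (FNM r R) F :=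
    fun F => ev_vNeg (FM r R) cP_FM cT_FM F
  have hnegFLM : ∀ F, ev r R (FLM r R) (vNeg r R F) = ev r R (FNLM r R) F := by
    intro F
    rw [ev_vNeg (FLM r R) cP_FLM cT_FLM F]
    have hfam : (fun i => -(FLM r R i) - bT r R i) = FNLM r R := by
      funext i
      show -(bLam r R i + bMu r R i) - bT r R i = -(bLam r R i) - bMu r R i - bT r R i
      abel
    rw [hfam]
  -- parities of coefficients
  have hXG : ∀ (δ : ZMod 2) (i : Fin r) (v : R), v ∈ G δ →
      (X i : MvPolynomial (Fin r) ℂ) • v ∈ G δ := fun δ i v hv => hG.2 i δ v hv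
  have hpbc : ∀ k, (p b c) k ∈ G (β + γ) := fun k => hppar β γ b c hb hc k
  have hpcb : ∀ k, (p c b) k ∈ G (β + γ) := fun k => by
    have h := hppar γ β c b hc hb k
    rwa [add_comm γ β] at h
  have hpab : ∀ k, (p a b) k ∈ G (α + β) := fun k => hppar α β a b ha hb k
  have hpba : ∀ k, (p b a) k ∈ G (α + β) := fun k => by
    have h := hppar β α b a hb ha k
    rwa [add_comm β α] at h
  have hpac : ∀ k, (p a c) k ∈ G (α + γ) := fun k => hppar α γ a c ha hc k
  have hpca : ∀ k, (p c a) k ∈ G (α + γ) := fun k => by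
    have h := hppar γ α c a hc ha k
    rwa [add_comm γ α] at h
  have hsup1 : ∀ k, (ev r R (FM r R) (p b c)) k ∈ G (β + γ) :=
    suppIn_ev _ _ (suppIn_fam _ (hXG _) _ (Or.inr (Or.inl rfl))) _ hpbc
  have hsup2 : ∀ k, (ev r R (FNM r R) (p c b)) k ∈ G (β + γ) :=
    suppIn_ev _ _ (suppIn_fam _ (hXG _) _ (Or.inr (Or.inr (Or.inr (Or.inr (Or.inl rfl)))))) _
      hpcb
  have hsup3 : ∀ k, (ev r R (FL r R) (p a b)) k ∈ G (α + β) :=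
    suppIn_ev _ _ (suppIn_fam _ (hXG _) _ (Or.inl rfl)) _ hpab
  have hsup4 : ∀ k, (ev r R (FNL r R) (p b a)) k ∈ G (α + β) :=
    suppIn_ev _ _ (suppIn_fam _ (hXG _) _ (Or.inr (Or.inr (Or.inr (Or.inl rfl))))) _ hpba
  have hsup5 : ∀ k, (ev r R (FL r R) (p a c)) k ∈ G (α + γ) :=
    suppIn_ev _ _ (suppIn_fam _ (hXG _) _ (Or.inl rfl)) _ hpac
  have hsup6 : ∀ k, (ev r R (FNL r R) (p c a)) k ∈ G (α + γ) :=
    suppIn_ev _ _ (suppIn_fam _ (hXG _) _ (Or.inr (Or.inr (Or.inr (Or.inl rfl))))) _ hpca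
  -- inner expansions of the star product
  have h1 : ev r R (FM r R) (s b c)
      = ev r R (FM r R) (p b c) + sgn β γ • ev r R (FNM r R) (p c b) := by
    rw [hdef β γ b c hb hc, ev_add, ev_zsmul, hnegFM]
  have h2 : ev r R (FL r R) (s a b)
      = ev r R (FL r R) (p a b) + sgn α β • ev r R (FNL r R) (p b a) := by
    rw [hdef α β a b ha hb, ev_add, ev_zsmul, hnegFL]
  have h3 : ev r R (FL r R) (s a c)
      = ev r R (FL r R) (p a c) + sgn α γ • ev r R (FNL r R) (p c a) := by
    rw [hdef α γ a c ha hc, ev_add, ev_zsmul, hnegFL]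
  -- intertwining relations (R-type)
  have iR_FL_FM : ∀ (x : R) i y, evR r R p (FL r R) x (FM r R i y)
      = FM r R i (evR r R p (FL r R) x y) := fun x i y => evR_bMu hpbil (FL r R) x i y
  have iR_FM_FL : ∀ (x : R) i y, evR r R p (FM r R) x (FL r R i y)
      = FL r R i (evR r R p (FM r R) x y) := fun x i y => evR_bLam hpbil (FM r R) x i y
  have iR_FNLM_FL : ∀ (x : R) i y, evR r R p (FNLM r R) x (FL r R i y)
      = FL r R i (evR r R p (FNLM r R) x y) := fun x i y => evR_bLam hpbil (FNLM r R) x i y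
  have iR_FL_FNM : ∀ (x : R) i y, evR r R p (FL r R) x (FNM r R i y)
      = FNLM r R i (evR r R p (FL r R) x y) := by
    intro x i y
    simp only [FNM, FNLM, LinearMap.sub_apply, LinearMap.neg_apply]
    rw [evR_sub hpbil, evR_neg hpbil, evR_bMu hpbil,
      evR_bT hpbil hpses (FL r R) cP_FL cT_FL cS_FL]
    simp only [FL]
    abel
  have iR_FM_FNL : ∀ (x : R) i y, evR r R p (FM r R) x (FNL r R i y)
      = FNLM r R i (evR r R p (FM r R) x y) := by
    intro x i y
    simp only [FNL, FNLM, LinearMap.sub_apply, LinearMap.neg_apply]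
    rw [evR_sub hpbil, evR_neg hpbil, evR_bLam hpbil,
      evR_bT hpbil hpses (FM r R) cP_FM cT_FM cS_FM]
    simp only [FM]
    abel
  have iR_FNLM_FNL : ∀ (x : R) i y, evR r R p (FNLM r R) x (FNL r R i y)
      = FM r R i (evR r R p (FNLM r R) x y) := by
    intro x i y
    simp only [FNL, LinearMap.sub_apply, LinearMap.neg_apply]
    rw [evR_sub hpbil, evR_neg hpbil, evR_bLam hpbil,
      evR_bT hpbil hpses (FNLM r R) cP_FNLM cT_FNLM cS_FNLM]
    simp only [FNLM, FM, LinearMap.sub_apply, LinearMap.neg_apply]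
    abel
  -- intertwining relations (L-type)
  have iL_FLM_FL : ∀ (z : R) i y, evL r R p (FLM r R) (FL r R i y) z
      = FL r R i (evL r R p (FLM r R) y z) := fun z i y => evL_bLam hpbil (FLM r R) z i y
  have iL_FNM_FL : ∀ (z : R) i y, evL r R p (FNM r R) (FL r R i y) z
      = FL r R i (evL r R p (FNM r R) y z) := fun z i y => evL_bLam hpbil (FNM r R) z i y
  have iL_FNL_FM : ∀ (z : R) i y, evL r R p (FNL r R) (FM r R i y) z
      = FM r R i (evL r R p (FNL r R) y z) := fun z i y => evL_bMu hpbil (FNL r R) z i y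
  have iL_FNL_FNM : ∀ (z : R) i y, evL r R p (FNL r R) (FNM r R i y) z
      = FNLM r R i (evL r R p (FNL r R) y z) := by
    intro z i y
    simp only [FNM, LinearMap.sub_apply, LinearMap.neg_apply]
    rw [evL_sub hpbil, evL_neg hpbil, evL_bMu hpbil,
      evL_bT hpbil hpses (FNL r R) cP_FNL cS_FNL]
    simp only [FNL, FNLM, LinearMap.sub_apply, LinearMap.neg_apply]
    abel
  have iL_FLM_FNL : ∀ (z : R) i y, evL r R p (FLM r R) (FNL r R i y) z
      = FM r R i (evL r R p (FLM r R) y z) := by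
    intro z i y
    simp only [FNL, LinearMap.sub_apply, LinearMap.neg_apply]
    rw [evL_sub hpbil, evL_neg hpbil, evL_bLam hpbil,
      evL_bT hpbil hpses (FLM r R) cP_FLM cS_FLM]
    simp only [FLM, FM, LinearMap.add_apply]
    abel
  have iL_FNM_FNL : ∀ (z : R) i y, evL r R p (FNM r R) (FNL r R i y) z
      = FNLM r R i (evL r R p (FNM r R) y z) := by
    intro z i y
    simp only [FNL, LinearMap.sub_apply, LinearMap.neg_apply]
    rw [evL_sub hpbil, evL_neg hpbil, evL_bLam hpbil,
      evL_bT hpbil hpses (FNM r R) cP_FNM cS_FNM]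
    simp only [FNM, FNLM, LinearMap.sub_apply, LinearMap.neg_apply]
    abel
  -- conversions to normal form
  have cv1 : evR r R p (FL r R) a (ev r R (FM r R) (p b c))
      = eRR p (FM r R) (FL r R) a (p b c) :=
    conv_evR hpbil _ _ _ a (iR_FL_FM a) _
  have cv2 : evR r R p (FL r R) a (ev r R (FNM r R) (p c b))
      = eRR p (FNLM r R) (FL r R) a (p c b) :=
    conv_evR hpbil _ _ _ a (iR_FL_FNM a) _
  have cv3 : evL r R p (FNL r R) (ev r R (FM r R) (p b c)) a
      = eLL p (FM r R) (FNL r R) (p b c) a :=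
    conv_evL hpbil _ _ _ a (iL_FNL_FM a) _
  have cv4 : evL r R p (FNL r R) (ev r R (FNM r R) (p c b)) a
      = eLL p (FNLM r R) (FNL r R) (p c b) a :=
    conv_evL hpbil _ _ _ a (iL_FNL_FNM a) _
  have cv5 : evL r R p (FLM r R) (ev r R (FL r R) (p a b)) c
      = eLL p (FL r R) (FLM r R) (p a b) c :=
    conv_evL hpbil _ _ _ c (iL_FLM_FL c) _
  have cv6 : evR r R p (FNLM r R) c (ev r R (FL r R) (p a b))
      = eRR p (FL r R) (FNLM r R) c (p a b) :=
    conv_evR hpbil _ _ _ c (iR_FNLM_FL c) _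
  have cv7 : evL r R p (FLM r R) (ev r R (FNL r R) (p b a)) c
      = eLL p (FM r R) (FLM r R) (p b a) c :=
    conv_evL hpbil _ _ _ c (iL_FLM_FNL c) _
  have cv8 : evR r R p (FNLM r R) c (ev r R (FNL r R) (p b a))
      = eRR p (FM r R) (FNLM r R) c (p b a) :=
    conv_evR hpbil _ _ _ c (iR_FNLM_FNL c) _
  have cv9 : evR r R p (FM r R) b (ev r R (FL r R) (p a c))
      = eRR p (FL r R) (FM r R) b (p a c) :=
    conv_evR hpbil _ _ _ b (iR_FM_FL b) _
  have cv10 : evL r R p (FNM r R) (ev r R (FL r R) (p a c)) b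
      = eLL p (FL r R) (FNM r R) (p a c) b :=
    conv_evL hpbil _ _ _ b (iL_FNM_FL b) _
  have cv11 : evR r R p (FM r R) b (ev r R (FNL r R) (p c a))
      = eRR p (FNLM r R) (FM r R) b (p c a) :=
    conv_evR hpbil _ _ _ b (iR_FM_FNL b) _
  have cv12 : evL r R p (FNM r R) (ev r R (FNL r R) (p c a)) b
      = eLL p (FNLM r R) (FNM r R) (p c a) b :=
    conv_evL hpbil _ _ _ b (iL_FNM_FNL b) _
  have cv13 : evR r R p (FL r R) b (ev r R (FM r R) (p c a))
      = eRR p (FM r R) (FL r R) b (p c a) :=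
    conv_evR hpbil _ _ _ b (iR_FL_FM b) _
  have cv14 : evL r R p (FLM r R) (ev r R (FL r R) (p b c)) a
      = eLL p (FL r R) (FLM r R) (p b c) a :=
    conv_evL hpbil _ _ _ a (iL_FLM_FL a) _
  have cv15 : evR r R p (FL r R) b (ev r R (FNM r R) (p a c))
      = eRR p (FNLM r R) (FL r R) b (p a c) :=
    conv_evR hpbil _ _ _ b (iR_FL_FNM b) _
  have cv16 : evL r R p (FNM r R) (ev r R (FL r R) (p b a)) c
      = eLL p (FL r R) (FNM r R) (p b a) c :=
    conv_evL hpbil _ _ _ c (iL_FNM_FL c) _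
  have cv17 : evR r R p (FL r R) c (ev r R (FM r R) (p a b))
      = eRR p (FM r R) (FL r R) c (p a b) :=
    conv_evR hpbil _ _ _ c (iR_FL_FM c) _
  have cv18 : evL r R p (FLM r R) (ev r R (FL r R) (p c a)) b
      = eLL p (FL r R) (FLM r R) (p c a) b :=
    conv_evL hpbil _ _ _ b (iL_FLM_FL b) _
  have cv19 : evR r R p (FL r R) c (ev r R (FNM r R) (p b a))
      = eRR p (FNLM r R) (FL r R) c (p b a) :=
    conv_evR hpbil _ _ _ c (iR_FL_FNM c) _
  have cv20 : evL r R p (FNM r R) (ev r R (FL r R) (p c b)) a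
      = eLL p (FL r R) (FNM r R) (p c b) a :=
    conv_evL hpbil _ _ _ a (iL_FNM_FL a) _
  -- the axioms in normal form
  have R1 : eRR p (FM r R) (FL r R) a (p b c)
      = sgn α β • eRR p (FL r R) (FM r R) b (p a c) := by
    have h := hpN2 α β a b c ha hb
    rwa [cv1, cv9] at h
  have R2 : eRR p (FM r R) (FL r R) a (p b c) - eLL p (FL r R) (FLM r R) (p a b) c
      = sgn β γ • (eRR p (FNLM r R) (FL r R) a (p c b)
        - eLL p (FL r R) (FNM r R) (p a c) b) := by
    have h := hpN1 β γ a b c hb hc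
    rwa [cv1, cv5, cv2, cv10] at h
  have ax3 : eRR p (FM r R) (FL r R) b (p c a) - eLL p (FL r R) (FLM r R) (p b c) a
      = sgn γ α • (eRR p (FNLM r R) (FL r R) b (p a c)
        - eLL p (FL r R) (FNM r R) (p b a) c) := by
    have h := hpN1 γ α b c a hc ha
    rwa [cv13, cv14, cv15, cv16] at h
  have ax4 : eRR p (FM r R) (FL r R) c (p a b) - eLL p (FL r R) (FLM r R) (p c a) b
      = sgn α β • (eRR p (FNLM r R) (FL r R) c (p b a)
        - eLL p (FL r R) (FNM r R) (p c b) a) := by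
    have h := hpN1 α β c a b ha hb
    rwa [cv17, cv18, cv19, cv20] at h
  -- the substitution Φ₁ : λ ↦ μ, μ ↦ -λ-μ-T
  have hφ1L : ∀ i y, phi (FM r R) (FNLM r R) (bLam r R i y)
      = FM r R i (phi (FM r R) (FNLM r R) y) := phi_bLam _ _ cP_FM
  have hφ1M : ∀ i y, phi (FM r R) (FNLM r R) (bMu r R i y)
      = FNLM r R i (phi (FM r R) (FNLM r R) y) := phi_bMu _ _ cP_FNLM cFM_FNLM
  have hφ1T : ∀ i y, phi (FM r R) (FNLM r R) (bT r R i y)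
      = bT r R i (phi (FM r R) (FNLM r R) y) := phi_bT _ _ cT_FM cT_FNLM
  have hφ1_FL : ∀ i y, phi (FM r R) (FNLM r R) (FL r R i y)
      = FM r R i (phi (FM r R) (FNLM r R) y) := hφ1L
  have hφ1_FM : ∀ i y, phi (FM r R) (FNLM r R) (FM r R i y)
      = FNLM r R i (phi (FM r R) (FNLM r R) y) := hφ1M
  have hφ1_FLM : ∀ i y, phi (FM r R) (FNLM r R) (FLM r R i y)
      = FNL r R i (phi (FM r R) (FNLM r R) y) := by
    intro i y
    have e1 : FLM r R i y = bLam r R i y + bMu r R i y := rfl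
    rw [e1, phi_add, hφ1L, hφ1M]
    simp only [FNL, FM, FNLM, LinearMap.sub_apply, LinearMap.neg_apply]
    abel
  have hφ1_FNLM : ∀ i y, phi (FM r R) (FNLM r R) (FNLM r R i y)
      = FL r R i (phi (FM r R) (FNLM r R) y) := by
    intro i y
    have e1 : FNLM r R i y = -(bLam r R i y) - bMu r R i y - bT r R i y := rfl
    have e2 : -(bLam r R i y) - bMu r R i y - bT r R i y
        = -(bLam r R i y) - (bMu r R i y) - (bT r R i y) := rfl
    rw [e1, phi_sub _ _ _ _, phi_sub _ _ _ _, show phi (FM r R) (FNLM r R) (-(bLam r R i y))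
      = -(phi (FM r R) (FNLM r R) (bLam r R i y)) from map_neg (phiA _ _) _,
      hφ1L, hφ1M, hφ1T]
    simp only [FL, FM, FNLM, LinearMap.sub_apply, LinearMap.neg_apply]
    abel
  have hφ1_FNM : ∀ i y, phi (FM r R) (FNLM r R) (FNM r R i y)
      = FLM r R i (phi (FM r R) (FNLM r R) y) := by
    intro i y
    have e1 : FNM r R i y = -(bMu r R i y) - bT r R i y := rfl
    rw [e1, phi_sub _ _ _ _, show phi (FM r R) (FNLM r R) (-(bMu r R i y))
      = -(phi (FM r R) (FNLM r R) (bMu r R i y)) from map_neg (phiA _ _) _,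
      hφ1M, hφ1T]
    simp only [FLM, FM, FNLM, LinearMap.sub_apply, LinearMap.neg_apply, LinearMap.add_apply]
    abel
  -- the substitution Φ₂ : λ ↦ -λ-μ-T, μ ↦ λ
  have hφ2L : ∀ i y, phi (FNLM r R) (FL r R) (bLam r R i y)
      = FNLM r R i (phi (FNLM r R) (FL r R) y) := phi_bLam _ _ cP_FNLM
  have hφ2M : ∀ i y, phi (FNLM r R) (FL r R) (bMu r R i y)
      = FL r R i (phi (FNLM r R) (FL r R) y) := phi_bMu _ _ cP_FL cFNLM_FL
  have hφ2T : ∀ i y, phi (FNLM r R) (FL r R) (bT r R i y)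
      = bT r R i (phi (FNLM r R) (FL r R) y) := phi_bT _ _ cT_FNLM cT_FL
  have hφ2_FL : ∀ i y, phi (FNLM r R) (FL r R) (FL r R i y)
      = FNLM r R i (phi (FNLM r R) (FL r R) y) := hφ2L
  have hφ2_FM : ∀ i y, phi (FNLM r R) (FL r R) (FM r R i y)
      = FL r R i (phi (FNLM r R) (FL r R) y) := hφ2M
  have hφ2_FLM : ∀ i y, phi (FNLM r R) (FL r R) (FLM r R i y)
      = FNM r R i (phi (FNLM r R) (FL r R) y) := by
    intro i y
    have e1 : FLM r R i y = bLam r R i y + bMu r R i y := rfl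
    rw [e1, phi_add, hφ2L, hφ2M]
    simp only [FNM, FL, FNLM, LinearMap.sub_apply, LinearMap.neg_apply]
    abel
  have hφ2_FNLM : ∀ i y, phi (FNLM r R) (FL r R) (FNLM r R i y)
      = FM r R i (phi (FNLM r R) (FL r R) y) := by
    intro i y
    have e1 : FNLM r R i y = -(bLam r R i y) - bMu r R i y - bT r R i y := rfl
    rw [e1, phi_sub _ _ _ _, phi_sub _ _ _ _, show phi (FNLM r R) (FL r R) (-(bLam r R i y))
      = -(phi (FNLM r R) (FL r R) (bLam r R i y)) from map_neg (phiA _ _) _,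
      hφ2L, hφ2M, hφ2T]
    simp only [FM, FL, FNLM, LinearMap.sub_apply, LinearMap.neg_apply]
    abel
  have hφ2_FNM : ∀ i y, phi (FNLM r R) (FL r R) (FNM r R i y)
      = FNL r R i (phi (FNLM r R) (FL r R) y) := by
    intro i y
    have e1 : FNM r R i y = -(bMu r R i y) - bT r R i y := rfl
    rw [e1, phi_sub _ _ _ _, show phi (FNLM r R) (FL r R) (-(bMu r R i y))
      = -(phi (FNLM r R) (FL r R) (bMu r R i y)) from map_neg (phiA _ _) _,
      hφ2M, hφ2T]
    simp only [FNL, FL, LinearMap.sub_apply, LinearMap.neg_apply]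
    try abel
  -- substituted axioms
  have R3 : eRR p (FNLM r R) (FM r R) b (p c a) - eLL p (FM r R) (FNL r R) (p b c) a
      = sgn α γ • (eRR p (FL r R) (FM r R) b (p a c)
        - eLL p (FM r R) (FLM r R) (p b a) c) := by
    have h := congrArg (phi (FM r R) (FNLM r R)) ax3
    rw [phi_sub, phi_zsmul, phi_sub,
      phi_eRR _ _ _ _ _ _ p hφ1_FM hφ1_FL b (p c a),
      phi_eLL _ _ _ _ _ _ p hφ1_FL hφ1_FLM a (p b c),
      phi_eRR _ _ _ _ _ _ p hφ1_FNLM hφ1_FL b (p a c),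
      phi_eLL _ _ _ _ _ _ p hφ1_FL hφ1_FNM c (p b a)] at h
    rwa [sgn_comm γ α] at h
  have R4 : eRR p (FL r R) (FNLM r R) c (p a b) - eLL p (FNLM r R) (FNM r R) (p c a) b
      = sgn α β • (eRR p (FM r R) (FNLM r R) c (p b a)
        - eLL p (FNLM r R) (FNL r R) (p c b) a) := by
    have h := congrArg (phi (FNLM r R) (FL r R)) ax4
    rw [phi_sub, phi_zsmul, phi_sub,
      phi_eRR _ _ _ _ _ _ p hφ2_FM hφ2_FL c (p a b),
      phi_eLL _ _ _ _ _ _ p hφ2_FL hφ2_FLM b (p c a),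
      phi_eRR _ _ _ _ _ _ p hφ2_FNLM hφ2_FL c (p b a),
      phi_eLL _ _ _ _ _ _ p hφ2_FL hφ2_FNM a (p c b)] at h
    exact h
  -- outer expansions
  have eA1 := expandR (r := r) (R := R) hdef (FL r R) (FNL r R) hnegFL ha
    (ev r R (FM r R) (p b c)) hsup1
  have eA2 := expandR (r := r) (R := R) hdef (FL r R) (FNL r R) hnegFL ha
    (ev r R (FNM r R) (p c b)) hsup2
  have eB0 := expandL (r := r) (R := R) hdef (FLM r R) (FNLM r R) hnegFLM hc
    (ev r R (FL r R) (p a b)) hsup3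
  have eB1 := expandL (r := r) (R := R) hdef (FLM r R) (FNLM r R) hnegFLM hc
    (ev r R (FNL r R) (p b a)) hsup4
  have eC1 := expandR (r := r) (R := R) hdef (FM r R) (FNM r R) hnegFM hb
    (ev r R (FL r R) (p a c)) hsup5
  have eC2 := expandR (r := r) (R := R) hdef (FM r R) (FNM r R) hnegFM hb
    (ev r R (FNL r R) (p c a)) hsup6
  rw [sgn_add_right, cv1, cv3] at eA1
  rw [sgn_add_right, cv2, cv4] at eA2
  rw [sgn_add_left, cv5, cv6] at eB0
  rw [sgn_add_left, cv7, cv8] at eB1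
  rw [sgn_add_right, sgn_comm β α, cv9, cv10] at eC1
  rw [sgn_add_right, sgn_comm β α, cv11, cv12] at eC2
  -- rewrite the goal
  rw [h1, evR_add hs (FL r R) a _ _, evR_zsmul hs (FL r R) a _ _, eA1, eA2,
    h2, evL_add hs (FLM r R) c _ _, evL_zsmul hs (FLM r R) c _ _, eB0, eB1,
    h3, evR_add hs (FM r R) b _ _, evR_zsmul hs (FM r R) b _ _, eC1, eC2]
  -- abbreviate
  set T1 := eRR p (FM r R) (FL r R) a (p b c) with hsetT1
  set T2 := eLL p (FL r R) (FLM r R) (p a b) c with hsetT2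
  set T3 := eRR p (FNLM r R) (FL r R) a (p c b) with hsetT3
  set T4 := eLL p (FL r R) (FNM r R) (p a c) b with hsetT4
  set T5 := eRR p (FL r R) (FM r R) b (p a c) with hsetT5
  set U1 := eLL p (FM r R) (FNL r R) (p b c) a with hsetU1
  set U2 := eLL p (FNLM r R) (FNL r R) (p c b) a with hsetU2
  set U3 := eRR p (FL r R) (FNLM r R) c (p a b) with hsetU3
  set U4 := eLL p (FM r R) (FLM r R) (p b a) c with hsetU4
  set U5 := eRR p (FM r R) (FNLM r R) c (p b a) with hsetU5
  set U6 := eRR p (FNLM r R) (FM r R) b (p c a) with hsetU6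
  set U7 := eLL p (FNLM r R) (FNM r R) (p c a) b with hsetU7
  -- zero forms of the axioms
  have hR1 : T1 - sgn α β • T5 = 0 := by rw [R1, sub_self]
  have hR2 : (T1 - T2) - sgn β γ • (T3 - T4) = 0 := by rw [R2, sub_self]
  have hR3 : (sgn α β * sgn α γ) • (U6 - U1) - sgn α β • (T5 - U4) = 0 := by
    rw [R3, smul_smul, mul_assoc, sgn_sq, mul_one, sub_self]
  have hR4 : (sgn α γ * sgn β γ) • (U3 - U7) - ((sgn α γ * sgn β γ) * sgn α β) • (U5 - U2)
      = 0 := by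
    rw [R4, smul_smul, sub_self]
  have key : (T1 + (sgn α β * sgn α γ) • U1 + sgn β γ • (T3 + (sgn α β * sgn α γ) • U2))
      + (2 : ℤ) • (T2 + (sgn α γ * sgn β γ) • U3)
      - ((T2 + (sgn α γ * sgn β γ) • U3)
        + sgn α β • (U4 + (sgn α γ * sgn β γ) • U5))
      - sgn α β • ((T5 + (sgn α β * sgn β γ) • T4)
        + sgn α γ • (U6 + (sgn α β * sgn β γ) • U7))
      = (2 : ℤ) • (T1 - sgn α β • T5) - ((T1 - T2) - sgn β γ • (T3 - T4))
        - ((sgn α β * sgn α γ) • (U6 - U1) - sgn α β • (T5 - U4))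
        + ((sgn α γ * sgn β γ) • (U3 - U7)
          - ((sgn α γ * sgn β γ) * sgn α β) • (U5 - U2)) := by
    have hv1 : sgn α β = 1 ∨ sgn α β = -1 := by
      unfold sgn
      rcases Nat.even_or_odd (α.val * β.val) with h | h
      · exact Or.inl (Even.neg_one_pow h)
      · exact Or.inr (Odd.neg_one_pow h)
    match_scalars <;> rcases hv1 with h | h <;> (try simp only [h]) <;> ring
  rw [key, hR1, hR2, hR3, hR4]
  simp
end CA
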